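/- arXiv:2512.24541 — 3 statements merged into one kernel-verified Lean document; each statement's English description precedes it below -/
import Mathlib

section
/- Let (W,S) be a Coxeter system, J ⊆ S finitary with longest element w_J ∈ W_J, and H the Hecke algebra. The map φ: M(J) → b_{w_J}·H, 1 ⊗ h ↦ b_{w_J}·h, is an isomorphism of right H-modules, where M(J) = ℒ(v⁻¹) ⊗_{H_J} H is the spherical module. In particular, the elements {b_{w_J}·δ_x : x ∈ ᴶW} are linearly independent in H over ℤ[v,v⁻¹]. -/
open List

namespace StmtSix

open scoped Classical

variable {B W : Type} [Group W] {M : CoxeterMatrix B} (cs : CoxeterSystem M W)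

local prefix:100 "s" => cs.simple
local prefix:100 "π" => cs.wordProd
local prefix:100 "ℓ" => cs.length

noncomputable def sigmaFun (i : B) : W × ℤˣ → W × ℤˣ :=
  fun p => (s i * p.1 * s i, (if p.1 = s i then -1 else 1) * p.2)

theorem simple_conj_eq_iff (i : B) (w x : W) : s i * w * s i = x ↔ w = s i * x * s i := by
  constructor
  · intro h
    have := congrArg (fun z => s i * z * s i) h
    rw [← this]
    simp only [mul_assoc, cs.simple_mul_simple_cancel_left]
    simp only [← mul_assoc, cs.simple_mul_simple_cancel_right]
  · intro h
    rw [h]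
    simp only [mul_assoc, cs.simple_mul_simple_cancel_left]
    simp only [← mul_assoc, cs.simple_mul_simple_cancel_right]

theorem sigmaFun_involutive (i : B) : Function.Involutive (sigmaFun cs i) := by
  rintro ⟨w, ε⟩
  simp only [sigmaFun]
  have h1 : s i * (s i * w * s i) * s i = w := by
    simp only [mul_assoc, cs.simple_mul_simple_cancel_left]
    simp only [← mul_assoc, cs.simple_mul_simple_cancel_right]
  have h2 : (s i * w * s i = s i) ↔ (w = s i) := by
    rw [simple_conj_eq_iff, cs.simple_mul_simple_self, one_mul]
  by_cases hw : w = s i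
  · rw [Prod.mk.injEq]
    exact ⟨h1, by rw [if_pos hw]; simp [h2.mpr hw]⟩
  · rw [Prod.mk.injEq]
    exact ⟨h1, by rw [if_neg hw]; simp [show ¬(s i * w * s i = s i) from fun hc => hw (h2.mp hc)]⟩

noncomputable def sigma (i : B) : Equiv.Perm (W × ℤˣ) :=
  Function.Involutive.toPerm _ (sigmaFun_involutive cs i)

theorem sigma_apply (i : B) (w : W) (ε : ℤˣ) :
    sigma cs i (w, ε) = (s i * w * s i, (if w = s i then -1 else 1) * ε) := rfl

theorem sigma_inv (i : B) : (sigma cs i)⁻¹ = sigma cs i :=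
  Equiv.ext fun _ => rfl

theorem sigma2_apply (i i' : B) (y : W) (e : ℤˣ) :
    (sigma cs i * sigma cs i') (y, e) =
      ((s i * s i') * y * (s i * s i')⁻¹,
        ((if y = s i' then -1 else 1) * (if y = s i' * (s i * s i') then -1 else 1)) * e) := by
  rw [Equiv.Perm.mul_apply, sigma_apply, sigma_apply]
  have hfst : s i * (s i' * y * s i') * s i = (s i * s i') * y * (s i * s i')⁻¹ := by
    rw [mul_inv_rev, cs.inv_simple, cs.inv_simple]; group
  have hcond : (s i' * y * s i' = s i) ↔ (y = s i' * (s i * s i')) := by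
    rw [simple_conj_eq_iff, ← mul_assoc]
  rw [hfst, Prod.mk.injEq]
  refine ⟨rfl, ?_⟩
  rw [hcond]
  simp only [mul_assoc, mul_comm, mul_left_comm]

theorem sigma_pow_apply (i i' : B) (n : ℕ) (w : W) (ε : ℤˣ) :
    ((sigma cs i * sigma cs i') ^ n) (w, ε) =
      ((s i * s i') ^ n * w * ((s i * s i') ^ n)⁻¹,
        (∏ k ∈ Finset.range n,
          ((if w = s i' * (s i * s i') ^ (2 * k) then (-1 : ℤˣ) else 1) *
           (if w = s i' * (s i * s i') ^ (2 * k + 1) then (-1 : ℤˣ) else 1))) * ε) := by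
  have hsps : ∀ k : ℕ, s i' * ((s i * s i') ^ k)⁻¹ * s i' = (s i * s i') ^ k := by
    have hbase : s i' * (s i * s i')⁻¹ * s i' = s i * s i' := by
      rw [mul_inv_rev, cs.inv_simple, cs.inv_simple, cs.simple_mul_simple_cancel_left]
    intro k
    calc s i' * ((s i * s i') ^ k)⁻¹ * s i' = s i' * ((s i * s i')⁻¹) ^ k * s i' := by
          rw [inv_pow]
      _ = (s i' * (s i * s i')⁻¹ * s i') ^ k := by
          induction k with
          | zero => simp [cs.simple_mul_simple_self]
          | succ m ih =>
              rw [pow_succ, pow_succ, ← ih]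
              have hins : ((s i * s i')⁻¹) ^ m * (s i * s i')⁻¹
                  = ((s i * s i')⁻¹) ^ m * (s i' * s i') * (s i * s i')⁻¹ := by
                rw [cs.simple_mul_simple_self, mul_one]
              rw [mul_assoc (s i'), hins]
              group
      _ = (s i * s i') ^ k := by rw [hbase]
  have hcval : ∀ k : ℕ, ((s i * s i') ^ k)⁻¹ * s i' * (s i * s i') ^ k
      = s i' * (s i * s i') ^ (2 * k) := by
    intro k
    calc ((s i * s i') ^ k)⁻¹ * s i' * (s i * s i') ^ k
        = s i' * (s i' * ((s i * s i') ^ k)⁻¹ * s i') * (s i * s i') ^ k := by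
          rw [show s i' * (s i' * ((s i * s i') ^ k)⁻¹ * s i') * (s i * s i') ^ k
              = (s i' * s i') * (((s i * s i') ^ k)⁻¹ * s i' * (s i * s i') ^ k) by group,
            cs.simple_mul_simple_self, one_mul]
      _ = s i' * (s i * s i') ^ k * (s i * s i') ^ k := by rw [hsps k, mul_assoc]
      _ = s i' * (s i * s i') ^ (2 * k) := by rw [mul_assoc, ← pow_add, two_mul]
  induction n with
  | zero => simp
  | succ n ih =>
    rw [pow_succ', Equiv.Perm.mul_apply, ih, sigma2_apply, Prod.mk.injEq]
    have hconj_iff : ∀ a x : W, ((s i * s i') ^ n * x * ((s i * s i') ^ n)⁻¹ = a)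
        ↔ x = ((s i * s i') ^ n)⁻¹ * a * (s i * s i') ^ n := by
      intro a x
      constructor
      · intro h; rw [← h]; group
      · intro h; rw [h]; group
    constructor
    · rw [pow_succ' (s i * s i') n]
      simp only [mul_inv_rev, cs.inv_simple, mul_assoc]
    · have hb2 : ((s i * s i') ^ n)⁻¹ * (s i' * (s i * s i')) * (s i * s i') ^ n
          = s i' * (s i * s i') ^ (2 * n + 1) := by
        calc ((s i * s i') ^ n)⁻¹ * (s i' * (s i * s i')) * (s i * s i') ^ n
            = ((s i * s i') ^ n)⁻¹ * s i' * ((s i * s i') * (s i * s i') ^ n) := by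
              simp only [mul_assoc]
          _ = ((s i * s i') ^ n)⁻¹ * s i' * ((s i * s i') ^ n * (s i * s i')) := by
              rw [← pow_succ', ← pow_succ]
          _ = (((s i * s i') ^ n)⁻¹ * s i' * (s i * s i') ^ n) * (s i * s i') := by
              simp only [mul_assoc]
          _ = s i' * (s i * s i') ^ (2 * n) * (s i * s i') := by rw [hcval n]
          _ = s i' * (s i * s i') ^ (2 * n + 1) := by rw [mul_assoc, ← pow_succ]
      have e1 : ((s i * s i') ^ n * w * ((s i * s i') ^ n)⁻¹ = s i')
          ↔ (w = s i' * (s i * s i') ^ (2 * n)) := by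
        rw [hconj_iff, hcval n]
      have e2 : ((s i * s i') ^ n * w * ((s i * s i') ^ n)⁻¹ = s i' * (s i * s i'))
          ↔ (w = s i' * (s i * s i') ^ (2 * n + 1)) := by
        rw [hconj_iff, hb2]
      rw [e1, e2, Finset.prod_range_succ]
      simp only [mul_assoc, mul_comm, mul_left_comm]

theorem isLiftable_sigma : M.IsLiftable (sigma cs) := by
  intro i i'
  apply Equiv.ext
  rintro ⟨w, ε⟩
  rw [sigma_pow_apply]
  have hpm : (s i * s i') ^ M i i' = 1 := cs.simple_mul_simple_pow i i'
  have hmerge : (∏ k ∈ Finset.range (M i i'),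
        ((if w = s i' * (s i * s i') ^ (2 * k) then (-1 : ℤˣ) else 1) *
         (if w = s i' * (s i * s i') ^ (2 * k + 1) then (-1 : ℤˣ) else 1)))
      = ∏ k ∈ Finset.range (2 * M i i'),
          (if w = s i' * (s i * s i') ^ k then (-1 : ℤˣ) else 1) := by
    induction (M i i') with
    | zero => simp
    | succ m ih =>
        rw [Finset.prod_range_succ, ih,
          show 2 * (m + 1) = 2 * m + 1 + 1 by ring, Finset.prod_range_succ,
          Finset.prod_range_succ, mul_assoc]
  have hper : ∀ k, (if w = s i' * (s i * s i') ^ (M i i' + k) then (-1 : ℤˣ) else 1)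
      = (if w = s i' * (s i * s i') ^ k then (-1 : ℤˣ) else 1) := by
    intro k
    rw [pow_add, hpm, one_mul]
  have hprod : (∏ k ∈ Finset.range (2 * M i i'),
      (if w = s i' * (s i * s i') ^ k then (-1 : ℤˣ) else 1)) = 1 := by
    rw [two_mul, Finset.prod_range_add]
    simp only [hper]
    rw [← sq]
    exact Int.units_sq _
  rw [hmerge, hprod, hpm, Equiv.Perm.one_apply, one_mul]
  simp

noncomputable def rho : W →* Equiv.Perm (W × ℤˣ) :=
  cs.lift ⟨sigma cs, isLiftable_sigma cs⟩

theorem rho_simple (i : B) : rho cs (s i) = sigma cs i :=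
  cs.lift_apply_simple (isLiftable_sigma cs) i

theorem rho_inv_wordProd (ω : List B) (w : W) (ε : ℤˣ) :
    (rho cs (π ω))⁻¹ (w, ε) =
      ((π ω)⁻¹ * w * π ω, ((-1 : ℤˣ) ^ ((cs.leftInvSeq ω).count w)) * ε) := by
  induction ω generalizing w ε with
  | nil => simp
  | cons i ω' ih =>
    rw [cs.wordProd_cons, map_mul, mul_inv_rev, Equiv.Perm.mul_apply, rho_simple, sigma_inv,
      sigma_apply, ih]
    have hcount : (cs.leftInvSeq (i :: ω')).count w
        = ((cs.leftInvSeq ω').count (s i * w * s i) + if w = s i then 1 else 0) := by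
      rw [show cs.leftInvSeq (i :: ω')
          = s i :: List.map (⇑(MulAut.conj (s i))) (cs.leftInvSeq ω') from rfl,
        List.count_cons]
      congr 1
      · have hw : w = (MulAut.conj (s i)) (s i * w * s i) := by
          simp only [MulAut.conj_apply, cs.inv_simple]
          rw [(simple_conj_eq_iff cs i (s i * w * s i) w).mpr rfl]
        nth_rw 1 [hw]
        exact List.count_map_of_injective _ _ (MulAut.conj (s i)).injective _
      · rcases Classical.em (w = s i) with h | h
        · have hb : (s i == w) = true := beq_iff_eq.mpr h.symm
          rw [if_pos hb, if_pos h]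
        · have hb : ¬((s i == w) = true) := fun hc => h (beq_iff_eq.mp hc).symm
          rw [if_neg hb, if_neg h]
    rw [hcount, Prod.mk.injEq]
    constructor
    · rw [mul_inv_rev, cs.inv_simple]
      simp only [mul_assoc]
    · rcases Classical.em (w = s i) with h | h
      · rw [if_pos h, if_pos h, pow_succ]
        simp only [mul_assoc, mul_comm, mul_left_comm]
      · rw [if_neg h, if_neg h, Nat.add_zero, one_mul]

theorem count_lis_parity {ω ω' : List B} (h : π ω = π ω') (w : W) :
    ((-1 : ℤˣ) ^ ((cs.leftInvSeq ω).count w)) = ((-1 : ℤˣ) ^ ((cs.leftInvSeq ω').count w)) := by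
  have h1 := rho_inv_wordProd cs ω w 1
  have h2 := rho_inv_wordProd cs ω' w 1
  rw [h] at h1
  have := h1.symm.trans h2
  have hsnd := congrArg Prod.snd this
  simpa using hsnd

theorem simple_mem_leftInvSeq {i : B} {ω : List B}
    (hlt : ℓ (s i * π ω) < ℓ (π ω)) : s i ∈ cs.leftInvSeq ω := by
  obtain ⟨θ, hθred, hθ⟩ := cs.exists_reduced_word' (s i * π ω)
  have hπ : π (i :: θ) = π ω := by
    rw [cs.wordProd_cons, ← hθ, cs.simple_mul_simple_cancel_left]
  have hnotmem : s i ∉ cs.leftInvSeq θ := by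
    intro hmem
    obtain ⟨-, hlt'⟩ := cs.isLeftInversion_of_mem_leftInvSeq hθred hmem
    rw [← hθ, cs.simple_mul_simple_cancel_left] at hlt'
    omega
  have hcount1 : (cs.leftInvSeq (i :: θ)).count (s i) = 1 := by
    rw [show cs.leftInvSeq (i :: θ)
        = s i :: List.map (⇑(MulAut.conj (s i))) (cs.leftInvSeq θ) from rfl,
      List.count_cons, if_pos (beq_self_eq_true _)]
    have hz : (List.map (⇑(MulAut.conj (s i))) (cs.leftInvSeq θ)).count (s i) = 0 := by
      rw [List.count_eq_zero]
      intro hmem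
      obtain ⟨t, ht, hconj⟩ := List.mem_map.mp hmem
      apply hnotmem
      have ht2 : t = s i := by
        simp only [MulAut.conj_apply, cs.inv_simple] at hconj
        rw [simple_conj_eq_iff] at hconj
        rwa [cs.simple_mul_simple_self, one_mul] at hconj
      rwa [ht2] at ht
    rw [hz]
  have hpar := count_lis_parity cs hπ (s i)
  rw [hcount1, pow_one] at hpar
  have hodd : (cs.leftInvSeq ω).count (s i) ≠ 0 := by
    intro h0
    rw [h0, pow_zero] at hpar
    exact absurd hpar.symm (by decide)
  exact List.count_pos_iff.mp (Nat.pos_of_ne_zero hodd)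

theorem exchange {i : B} {ω : List B}
    (hlt : ℓ (s i * π ω) < ℓ (π ω)) :
    ∃ j < ω.length, s i * π ω = π (ω.eraseIdx j) := by
  have hmem := simple_mem_leftInvSeq cs hlt
  obtain ⟨j, hj, hget⟩ := List.mem_iff_getElem.mp hmem
  rw [cs.length_leftInvSeq] at hj
  refine ⟨j, hj, ?_⟩
  have hgd := cs.getD_leftInvSeq_mul_wordProd ω j
  rw [List.getD_eq_getElem?_getD, List.getElem?_eq_getElem (by rwa [cs.length_leftInvSeq]),
    Option.getD_some, hget] at hgd
  exact hgd

theorem wordProd_mem_closure {J : Set B} {ω : List B} (hω : ∀ b ∈ ω, b ∈ J) :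
    π ω ∈ Subgroup.closure (cs.simple '' J) := by
  induction ω with
  | nil =>
      rw [cs.wordProd_nil]
      exact Subgroup.one_mem _
  | cons i ω' ih =>
      rw [cs.wordProd_cons]
      exact mul_mem (Subgroup.subset_closure ⟨i, hω i (List.mem_cons_self), rfl⟩)
        (ih fun b hb => hω b (List.mem_cons_of_mem _ hb))

theorem exists_J_word {J : Set B} {u : W} (hu : u ∈ Subgroup.closure (cs.simple '' J)) :
    ∃ ω : List B, (∀ b ∈ ω, b ∈ J) ∧ u = π ω := by
  induction hu using Subgroup.closure_induction with
  | mem x hx =>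
      obtain ⟨i, hi, rfl⟩ := hx
      exact ⟨[i], by simpa using hi, (cs.wordProd_singleton i).symm⟩
  | one => exact ⟨[], by simp, (cs.wordProd_nil).symm⟩
  | mul x y hx hy ihx ihy =>
      obtain ⟨ω₁, h₁, rfl⟩ := ihx
      obtain ⟨ω₂, h₂, rfl⟩ := ihy
      refine ⟨ω₁ ++ ω₂, ?_, (cs.wordProd_append ω₁ ω₂).symm⟩
      intro b hb
      rcases List.mem_append.mp hb with h | h
      · exact h₁ b h
      · exact h₂ b h
  | inv x hx ihx =>
      obtain ⟨ω₁, h₁, rfl⟩ := ihx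
      refine ⟨ω₁.reverse, ?_, (cs.wordProd_reverse ω₁).symm⟩
      intro b hb
      exact h₁ b (List.mem_reverse.mp hb)

theorem exists_reduced_J_word (J : Set B) (ω : List B) (hω : ∀ b ∈ ω, b ∈ J) :
    ∃ θ : List B, (∀ b ∈ θ, b ∈ J) ∧ cs.IsReduced θ ∧ π θ = π ω := by
  induction ω with
  | nil => exact ⟨[], by simp, by simp [CoxeterSystem.IsReduced], rfl⟩
  | cons i ω' ih =>
    obtain ⟨θ', hθ'J, hθ'red, hθ'π⟩ := ih (fun b hb => hω b (List.mem_cons_of_mem _ hb))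
    have hiJ : i ∈ J := hω i (List.mem_cons_self)
    by_cases hred : cs.IsReduced (i :: θ')
    · refine ⟨i :: θ', ?_, hred, by rw [cs.wordProd_cons, cs.wordProd_cons, hθ'π]⟩
      intro b hb
      rcases List.mem_cons.mp hb with h | h
      · exact h ▸ hiJ
      · exact hθ'J b h
    · have hlen : ℓ (π θ') = θ'.length := hθ'red
      have hne := cs.length_simple_mul_ne (π θ') i
      have hlt : ℓ (s i * π θ') < ℓ (π θ') := by
        rcases cs.length_simple_mul (π θ') i with h | h
        · exfalso
          apply hred
          show ℓ (π (i :: θ')) = (i :: θ').length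
          rw [cs.wordProd_cons, h, hlen, List.length_cons]
        · omega
      obtain ⟨j, hj, hex⟩ := exchange cs hlt
      refine ⟨θ'.eraseIdx j, ?_, ?_, ?_⟩
      · intro b hb
        exact hθ'J b ((List.eraseIdx_sublist θ' j).subset hb)
      · show ℓ (π (θ'.eraseIdx j)) = (θ'.eraseIdx j).length
        rw [← hex]
        have h1 := List.length_eraseIdx_add_one hj
        rcases cs.length_simple_mul (π θ') i with h | h
        · omega
        · omega
      · rw [← hex, cs.wordProd_cons, hθ'π]

theorem exists_reduced_J_word_of_mem {J : Set B} {u : W}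
    (hu : u ∈ Subgroup.closure (cs.simple '' J)) :
    ∃ ω : List B, (∀ b ∈ ω, b ∈ J) ∧ cs.IsReduced ω ∧ π ω = u := by
  obtain ⟨ω, hωJ, rfl⟩ := exists_J_word cs hu
  obtain ⟨θ, h1, h2, h3⟩ := exists_reduced_J_word cs J ω hωJ
  exact ⟨θ, h1, h2, h3⟩

theorem deodhar {J : Set B} {x : W}
    (hx : ∀ y : W, (∃ u ∈ Subgroup.closure (cs.simple '' J), y = u * x) → ℓ x ≤ ℓ y)
    (ω : List B) (hωJ : ∀ b ∈ ω, b ∈ J) (hωred : cs.IsReduced ω) :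
    ℓ (π ω * x) = ω.length + ℓ x := by
  induction ω with
  | nil => simp
  | cons i ω' ih =>
    have hω'J : ∀ b ∈ ω', b ∈ J := fun b hb => hωJ b (List.mem_cons_of_mem _ hb)
    have hω'red : cs.IsReduced ω' := by
      have := CoxeterSystem.IsReduced.drop (ω := i :: ω') hωred (j := 1)
      simpa using this
    have ih' := ih hω'J hω'red
    have hcons : ℓ (π (i :: ω')) = ω'.length + 1 := by
      rw [hωred]; simp
    rw [cs.wordProd_cons] at hcons
    rw [cs.wordProd_cons, mul_assoc]
    rcases cs.length_simple_mul (π ω' * x) i with h | h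
    · rw [h, ih']
      simp only [List.length_cons]
      omega
    · exfalso
      obtain ⟨ξ, hξred, hξ⟩ := cs.exists_reduced_word' x
      have hword : π (ω' ++ ξ) = π ω' * x := by rw [cs.wordProd_append, ← hξ]
      have hξlen : ξ.length = ℓ x := hξred ▸ (hξ ▸ rfl)
      have hlt : ℓ (s i * π (ω' ++ ξ)) < ℓ (π (ω' ++ ξ)) := by
        rw [hword]
        omega
      obtain ⟨j, hj, hex⟩ := exchange cs hlt
      rw [hword] at hex
      rw [List.length_append] at hj
      rcases Nat.lt_or_ge j ω'.length with hcase | hcase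
      · rw [List.eraseIdx_append_of_lt_length hcase, cs.wordProd_append] at hex
        have hcancel : s i * π ω' = π (ω'.eraseIdx j) := by
          have h2 : (s i * π ω') * x = π (ω'.eraseIdx j) * π ξ := by
            rw [mul_assoc, hex]
          rw [← hξ] at h2
          exact mul_right_cancel h2
        have hle := cs.length_wordProd_le (ω'.eraseIdx j)
        rw [← hcancel] at hle
        have h1 := List.length_eraseIdx_add_one hcase
        omega
      · rw [List.eraseIdx_append_of_length_le hcase, cs.wordProd_append] at hex
        set x' := π (ξ.eraseIdx (j - ω'.length)) with hx'def
        have hx'eq : x' = ((π ω')⁻¹ * s i * π ω') * x := by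
          have h2 : π ω' * x' = s i * (π ω' * x) := hex.symm
          have := congrArg (fun z => (π ω')⁻¹ * z) h2
          rw [← mul_assoc, inv_mul_cancel, one_mul] at this
          rw [this]
          simp only [mul_assoc]
        have hmem : (π ω')⁻¹ * s i * π ω' ∈ Subgroup.closure (cs.simple '' J) :=
          mul_mem (mul_mem (inv_mem (wordProd_mem_closure cs hω'J))
            (Subgroup.subset_closure ⟨i, hωJ i (List.mem_cons_self), rfl⟩))
            (wordProd_mem_closure cs hω'J)
        have hmin := hx x' ⟨_, hmem, hx'eq⟩
        have hle := cs.length_wordProd_le (ξ.eraseIdx (j - ω'.length))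
        have h1 : j - ω'.length < ξ.length := by omega
        have h2 := List.length_eraseIdx_add_one h1
        rw [← hx'def] at hle
        omega

theorem min_rep_decomp (J : Set B) (w : W) :
    ∃ u x : W, u ∈ Subgroup.closure (cs.simple '' J) ∧
      (∀ y : W, (∃ v ∈ Subgroup.closure (cs.simple '' J), y = v * x) → ℓ x ≤ ℓ y) ∧
      w = u * x := by
  set S : Set ℕ := {n | ∃ x : W, (∃ v ∈ Subgroup.closure (cs.simple '' J), x = v * w)
      ∧ ℓ x = n} with hS
  have hne : S.Nonempty := ⟨ℓ w, w, ⟨1, Subgroup.one_mem _, (one_mul w).symm⟩, rfl⟩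
  obtain ⟨x, ⟨v, hv, hxv⟩, hxn⟩ := Nat.sInf_mem hne
  refine ⟨v⁻¹, x, inv_mem hv, ?_, by rw [hxv, ← mul_assoc, inv_mul_cancel, one_mul]⟩
  rintro y ⟨v', hv', hy⟩
  have hyS : ℓ y ∈ S := ⟨y, ⟨v' * v, mul_mem hv' hv, by rw [hy, hxv, mul_assoc]⟩, rfl⟩
  have := Nat.sInf_le hyS
  omega

theorem length_mul_of_min {J : Set B} {x u : W}
    (hx : ∀ y : W, (∃ v ∈ Subgroup.closure (cs.simple '' J), y = v * x) → ℓ x ≤ ℓ y)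
    (hu : u ∈ Subgroup.closure (cs.simple '' J)) :
    ℓ (u * x) = ℓ u + ℓ x := by
  obtain ⟨ω, hωJ, hωred, hωπ⟩ := exists_reduced_J_word_of_mem cs hu
  have := deodhar cs hx ω hωJ hωred
  rw [hωπ] at this
  rw [this, ← hωπ, hωred]

theorem min_rep_unique {J : Set B} {x x' u : W}
    (hx : ∀ y : W, (∃ v ∈ Subgroup.closure (cs.simple '' J), y = v * x) → ℓ x ≤ ℓ y)
    (hx' : ∀ y : W, (∃ v ∈ Subgroup.closure (cs.simple '' J), y = v * x') → ℓ x' ≤ ℓ y)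
    (hu : u ∈ Subgroup.closure (cs.simple '' J)) (h : x' = u * x) :
    u = 1 ∧ x' = x := by
  have h1 : ℓ x' = ℓ u + ℓ x := by rw [h]; exact length_mul_of_min cs hx hu
  have h2 : ℓ x' ≤ ℓ x := hx' x ⟨u⁻¹, inv_mem hu, by rw [h, ← mul_assoc, inv_mul_cancel, one_mul]⟩
  have h3 : ℓ u = 0 := by omega
  have h4 : u = 1 := cs.length_eq_zero_iff.mp h3
  exact ⟨h4, by rw [h, h4, one_mul]⟩

section Hecke

open LaurentPolynomial

variable (H : Type) [Ring H] [Algebra (LaurentPolynomial ℤ) H]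
  (δ : Module.Basis W (LaurentPolynomial ℤ) H)

theorem desc_formula
    (hmul : ∀ u w : W, ℓ (u * w) = ℓ u + ℓ w → δ u * δ w = δ (u * w))
    (hquad : ∀ i : B, δ (s i) * δ (s i)
      = 1 + ((T (-1) - T 1 : LaurentPolynomial ℤ)) • δ (s i))
    (u : W) (i : B) (h : ℓ (u * s i) + 1 = ℓ u) :
    δ u * δ (s i) = δ (u * s i) + ((T (-1) - T 1 : LaurentPolynomial ℤ)) • δ u := by
  have hus : δ (u * s i) * δ (s i) = δ u := by
    have : ℓ ((u * s i) * s i) = ℓ (u * s i) + ℓ (s i) := by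
      rw [cs.simple_mul_simple_cancel_right, cs.length_simple]
      omega
    rw [hmul _ _ this, cs.simple_mul_simple_cancel_right]
  calc δ u * δ (s i) = (δ (u * s i) * δ (s i)) * δ (s i) := by rw [hus]
    _ = δ (u * s i) * (δ (s i) * δ (s i)) := by rw [mul_assoc]
    _ = δ (u * s i) * (1 + ((T (-1) - T 1 : LaurentPolynomial ℤ)) • δ (s i)) := by
        rw [hquad i]
    _ = δ (u * s i) + ((T (-1) - T 1 : LaurentPolynomial ℤ)) • (δ (u * s i) * δ (s i)) := by
        rw [mul_add, mul_one, mul_smul_comm]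
    _ = δ (u * s i) + ((T (-1) - T 1 : LaurentPolynomial ℤ)) • δ u := by rw [hus]

theorem b_mul_simple
    (hmul : ∀ u w : W, ℓ (u * w) = ℓ u + ℓ w → δ u * δ w = δ (u * w))
    (hquad : ∀ i : B, δ (s i) * δ (s i)
      = 1 + ((T (-1) - T 1 : LaurentPolynomial ℤ)) • δ (s i))
    (WJ : Subgroup W) [Fintype WJ] (wL : ℤ) (j : B) (hsj : s j ∈ WJ) :
    (∑ u : WJ, (T (wL - (ℓ (u : W) : ℤ)) : LaurentPolynomial ℤ) • δ (u : W)) * δ (s j)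
      = (T (-1) : LaurentPolynomial ℤ) •
        ∑ u : WJ, (T (wL - (ℓ (u : W) : ℤ)) : LaurentPolynomial ℤ) • δ (u : W) := by
  have hmuls : ∀ u : W, ℓ (u * s j) = ℓ u + 1 → δ u * δ (s j) = δ (u * s j) := by
    intro u h
    exact hmul u (s j) (by rw [cs.length_simple]; exact h)
  rw [Finset.sum_mul, Finset.smul_sum]
  have hsplit : ∀ u : WJ, ((T (wL - (ℓ (u : W) : ℤ)) : LaurentPolynomial ℤ) • δ (u : W)) * δ (s j)
      = (T (wL - (ℓ (u : W) : ℤ)) : LaurentPolynomial ℤ) • δ ((u : W) * s j)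
        + (if ℓ ((u : W) * s j) + 1 = ℓ (u : W) then
            ((T (wL - (ℓ (u : W) : ℤ)) * (T (-1) - T 1) : LaurentPolynomial ℤ)) • δ (u : W)
           else 0) := by
    intro u
    rw [smul_mul_assoc]
    rcases cs.length_mul_simple (u : W) j with h | h
    · rw [hmuls _ h, if_neg (by omega), add_zero]
    · rw [desc_formula cs H δ hmul hquad _ j h, if_pos h, smul_add, mul_smul]
  rw [Finset.sum_congr rfl (fun u _ => hsplit u), Finset.sum_add_distrib]
  have hreindex : (∑ u : WJ, (T (wL - (ℓ (u : W) : ℤ)) : LaurentPolynomial ℤ) • δ ((u : W) * s j))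
      = ∑ u : WJ, (T (wL - (ℓ ((u : W) * s j) : ℤ)) : LaurentPolynomial ℤ) • δ (u : W) := by
    apply Fintype.sum_equiv (Equiv.mulRight (⟨s j, hsj⟩ : WJ))
    intro u
    have hcoe : (((Equiv.mulRight (⟨s j, hsj⟩ : WJ)) u : WJ) : W) = (u : W) * s j := rfl
    rw [hcoe, cs.simple_mul_simple_cancel_right]
  rw [hreindex, ← Finset.sum_add_distrib]
  apply Finset.sum_congr rfl
  intro u _
  rcases cs.length_mul_simple (u : W) j with h | h
  · rw [if_neg (by omega), add_zero, h, smul_smul, ← T_add]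
    congr 2
    push_cast
    ring
  · rw [if_pos h, ← add_smul, smul_smul, ← T_add]
    congr 1
    have harg : ((ℓ ((u : W) * s j)) : ℤ) = (ℓ (u : W) : ℤ) - 1 := by
      omega
    rw [harg, mul_sub, ← T_add, ← T_add]
    rw [show wL - ((ℓ (u:W) : ℤ) - 1) = wL - (ℓ (u:W) : ℤ) + 1 by ring,
      show wL - (ℓ (u:W) : ℤ) + -1 = -1 + (wL - (ℓ (u:W) : ℤ)) by ring,
      show wL - (ℓ (u:W) : ℤ) + 1 = 1 + (wL - (ℓ (u:W) : ℤ)) by ring]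
    ring

theorem b_mul_word
    (hmul : ∀ u w : W, ℓ (u * w) = ℓ u + ℓ w → δ u * δ w = δ (u * w))
    (hquad : ∀ i : B, δ (s i) * δ (s i)
      = 1 + ((T (-1) - T 1 : LaurentPolynomial ℤ)) • δ (s i))
    (hδ1 : δ 1 = 1)
    (WJ : Subgroup W) [Fintype WJ] (wL : ℤ) (J : Set B) (hJ : ∀ b ∈ J, s b ∈ WJ)
    (ω : List B) (hωJ : ∀ b ∈ ω, b ∈ J) (hωred : cs.IsReduced ω) :
    (∑ u : WJ, (T (wL - (ℓ (u : W) : ℤ)) : LaurentPolynomial ℤ) • δ (u : W)) * δ (π ω)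
      = (T (-(ω.length : ℤ)) : LaurentPolynomial ℤ) •
        ∑ u : WJ, (T (wL - (ℓ (u : W) : ℤ)) : LaurentPolynomial ℤ) • δ (u : W) := by
  induction ω with
  | nil =>
      rw [cs.wordProd_nil, hδ1, mul_one]
      norm_num
  | cons i ω' ih =>
      have hω'J : ∀ b ∈ ω', b ∈ J := fun b hb => hωJ b (List.mem_cons_of_mem _ hb)
      have hω'red : cs.IsReduced ω' := by
        have := CoxeterSystem.IsReduced.drop (ω := i :: ω') hωred (j := 1)
        simpa using this
      have hlen : ℓ (s i * π ω') = ℓ (s i) + ℓ (π ω') := by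
        have h1 : ℓ (π (i :: ω')) = ω'.length + 1 := by rw [hωred]; simp
        rw [cs.wordProd_cons] at h1
        rw [h1, cs.length_simple, hω'red]
        omega
      rw [cs.wordProd_cons, ← hmul (s i) (π ω') hlen, ← mul_assoc,
        b_mul_simple cs H δ hmul hquad WJ wL i (hJ i (hωJ i (List.mem_cons_self))),
        smul_mul_assoc, ih hω'J hω'red, smul_smul, ← T_add]
      congr 2
      simp only [List.length_cons]
      push_cast
      ring

open MulOpposite in
theorem op_smul_comm' (MM : Type) [AddCommGroup MM] [Module (LaurentPolynomial ℤ) MM]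
    [Module Hᵐᵒᵖ MM] [IsScalarTower (LaurentPolynomial ℤ) Hᵐᵒᵖ MM]
    (c : LaurentPolynomial ℤ) (a : Hᵐᵒᵖ) (m : MM) : a • (c • m) = c • (a • m) := by
  calc a • (c • m) = a • ((c • (1 : Hᵐᵒᵖ)) • m) := by rw [smul_assoc, one_smul]
    _ = (a * (c • (1 : Hᵐᵒᵖ))) • m := (mul_smul _ _ _).symm
    _ = (c • (a * 1)) • m := by rw [Algebra.mul_smul_comm]
    _ = (c • a) • m := by rw [mul_one]
    _ = c • (a • m) := smul_assoc _ _ _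

open MulOpposite in
theorem m1_word
    (hmul : ∀ u w : W, ℓ (u * w) = ℓ u + ℓ w → δ u * δ w = δ (u * w))
    (hδ1 : δ 1 = 1)
    (MM : Type) [AddCommGroup MM] [Module (LaurentPolynomial ℤ) MM]
    [Module Hᵐᵒᵖ MM] [IsScalarTower (LaurentPolynomial ℤ) Hᵐᵒᵖ MM]
    (m1 : MM) (J : Set B)
    (hsph : ∀ j ∈ J, op (δ (s j)) • m1 = (T (-1) : LaurentPolynomial ℤ) • m1)
    (ω : List B) (hωJ : ∀ b ∈ ω, b ∈ J) (hωred : cs.IsReduced ω) :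
    op (δ (π ω)) • m1 = (T (-(ω.length : ℤ)) : LaurentPolynomial ℤ) • m1 := by
  induction ω with
  | nil =>
      rw [cs.wordProd_nil, hδ1, op_one, one_smul]
      norm_num
  | cons i ω' ih =>
      have hω'J : ∀ b ∈ ω', b ∈ J := fun b hb => hωJ b (List.mem_cons_of_mem _ hb)
      have hω'red : cs.IsReduced ω' := by
        have := CoxeterSystem.IsReduced.drop (ω := i :: ω') hωred (j := 1)
        simpa using this
      have hlen : ℓ (s i * π ω') = ℓ (s i) + ℓ (π ω') := by
        have h1 : ℓ (π (i :: ω')) = ω'.length + 1 := by rw [hωred]; simp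
        rw [cs.wordProd_cons] at h1
        rw [h1, cs.length_simple, hω'red]
        omega
      rw [cs.wordProd_cons, ← hmul (s i) (π ω') hlen, op_mul, mul_smul,
        hsph i (hωJ i (List.mem_cons_self)),
        op_smul_comm' H MM _ _ _, ih hω'J hω'red, smul_smul, ← T_add]
      congr 2
      simp only [List.length_cons]
      push_cast
      ring

end Hecke

end StmtSix

open LaurentPolynomial MulOpposite

/-- The map φ : M(J) → b_{w_J}·H, 1 ⊗ h ↦ b_{w_J}·h is an isomorphism of
right H-modules, where M(J) is the spherical module; in particular the elements
{b_{w_J}·δ_x : x ∈ ᴶW} are linearly independent over ℤ[v,v⁻¹]. The spherical module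
M(J) is presented abstractly as a right H-module MM generated by m1 on which δ_s acts by
v⁻¹ for s ∈ J, with standard basis {op (δ x) • m1 : x ∈ ᴶW}. -/
theorem stmt_6 {B W : Type} [Group W] {M : CoxeterMatrix B} (cs : CoxeterSystem M W)
    (J : Set B) (WJ : Subgroup W) (hWJ : WJ = Subgroup.closure (cs.simple '' J))
    [Fintype WJ]
    (H : Type) [Ring H] [Algebra (LaurentPolynomial ℤ) H]
    (δ : Module.Basis W (LaurentPolynomial ℤ) H) (hδ1 : δ 1 = 1)
    (hmul : ∀ u w : W, cs.length (u * w) = cs.length u + cs.length w →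
        δ u * δ w = δ (u * w))
    (hquad : ∀ i : B, δ (cs.simple i) * δ (cs.simple i)
        = 1 + ((T (-1) - T 1 : LaurentPolynomial ℤ)) • δ (cs.simple i))
    (wJ : W) (hwJmem : wJ ∈ WJ) (hwJmax : ∀ u ∈ WJ, cs.length u ≤ cs.length wJ)
    (MM : Type) [AddCommGroup MM] [Module (LaurentPolynomial ℤ) MM]
    [Module Hᵐᵒᵖ MM] [IsScalarTower (LaurentPolynomial ℤ) Hᵐᵒᵖ MM]
    (m1 : MM)
    (hgen : ∀ m : MM, ∃ h : H, m = op h • m1)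
    (hsph : ∀ j ∈ J, op (δ (cs.simple j)) • m1 = (T (-1) : LaurentPolynomial ℤ) • m1)
    (bas : Module.Basis {x : W // ∀ y : W, (∃ u ∈ WJ, y = u * x) → cs.length x ≤ cs.length y}
        (LaurentPolynomial ℤ) MM)
    (hbas : ∀ x, bas x = op (δ x.1) • m1) :
    (∃ φ : MM →ₗ[Hᵐᵒᵖ] H,
        φ m1 = (∑ u : WJ,
            (T ((cs.length wJ : ℤ) - (cs.length (u : W) : ℤ)) : LaurentPolynomial ℤ) • δ (u : W)) ∧
        Function.Injective φ ∧
        LinearMap.range φ = Submodule.span Hᵐᵒᵖ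
          {∑ u : WJ,
            (T ((cs.length wJ : ℤ) - (cs.length (u : W) : ℤ)) : LaurentPolynomial ℤ) • δ (u : W)}) ∧
    LinearIndependent (LaurentPolynomial ℤ)
      (fun x : {x : W // ∀ y : W, (∃ u ∈ WJ, y = u * x) → cs.length x ≤ cs.length y} =>
        (∑ u : WJ,
          (T ((cs.length wJ : ℤ) - (cs.length (u : W) : ℤ)) : LaurentPolynomial ℤ) • δ (u : W))
          * δ x.1) := by
  classical
  subst hWJ
  set bb : H := ∑ u : Subgroup.closure (cs.simple '' J),
      (T ((cs.length wJ : ℤ) - (cs.length (u : W) : ℤ)) : LaurentPolynomial ℤ) • δ (u : W)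
    with hbbdef
  set L : ℤ := (cs.length wJ : ℤ) with hLdef
  let ι : Type := {x : W // ∀ y : W,
    (∃ u ∈ Subgroup.closure (cs.simple '' J), y = u * x) → cs.length x ≤ cs.length y}
  have hJmem : ∀ b ∈ J, cs.simple b ∈ Subgroup.closure (cs.simple '' J) :=
    fun b hb => Subgroup.subset_closure ⟨b, hb, rfl⟩
  -- b * δ u = v^{-ℓ u} b  for u ∈ WJ
  have hbu : ∀ u ∈ Subgroup.closure (cs.simple '' J), bb * δ u = (T (-(cs.length u : ℤ)) : LaurentPolynomial ℤ) • bb := by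
    intro u hu
    obtain ⟨ω, hωJ, hωred, hωπ⟩ := StmtSix.exists_reduced_J_word_of_mem cs hu
    have hlen : (ω.length : ℤ) = (cs.length u : ℤ) := by
      rw [← hωπ, hωred]
    have := StmtSix.b_mul_word cs H δ hmul hquad hδ1 (Subgroup.closure (cs.simple '' J)) L J hJmem ω hωJ hωred
    rw [hωπ, hlen] at this
    exact this
  -- m1 · δ u = v^{-ℓ u} m1 for u ∈ WJ
  have hmu : ∀ u ∈ Subgroup.closure (cs.simple '' J), op (δ u) • m1 = (T (-(cs.length u : ℤ)) : LaurentPolynomial ℤ) • m1 := by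
    intro u hu
    obtain ⟨ω, hωJ, hωred, hωπ⟩ := StmtSix.exists_reduced_J_word_of_mem cs hu
    have hlen : (ω.length : ℤ) = (cs.length u : ℤ) := by
      rw [← hωπ, hωred]
    have := StmtSix.m1_word cs H δ hmul hδ1 MM m1 J hsph ω hωJ hωred
    rw [hωπ, hlen] at this
    exact this
  -- the identity coset representative
  have hx1 : ∀ y : W, (∃ u ∈ Subgroup.closure (cs.simple '' J), y = u * (1 : W)) → cs.length (1 : W) ≤ cs.length y := by
    intro y _
    rw [cs.length_one]
    exact Nat.zero_le _
  have hm1 : bas ⟨1, hx1⟩ = m1 := by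
    rw [hbas ⟨1, hx1⟩]
    show op (δ 1) • m1 = m1
    rw [hδ1, op_one, one_smul]
  -- the ℒ-linear map
  set φ₀ : MM →ₗ[LaurentPolynomial ℤ] H := bas.constr ℕ (fun x => bb * δ x.1) with hφ₀def
  have hφ₀bas : ∀ x : ι, φ₀ (bas x) = bb * δ x.1 := fun x => bas.constr_basis ℕ _ x
  set act : H →ₗ[LaurentPolynomial ℤ] MM :=
    { toFun := fun h => op h • m1,
      map_add' := fun a b => by
        show op (a + b) • m1 = op a • m1 + op b • m1
        rw [op_add, add_smul],
      map_smul' := fun c h => by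
        show op (c • h) • m1 = c • (op h • m1)
        rw [op_smul, smul_assoc] } with hactdef
  have key1 : ∀ h : H, φ₀ (op h • m1) = bb * h := by
    have heq : φ₀.comp act = LinearMap.mulLeft (LaurentPolynomial ℤ) bb := by
      apply Module.Basis.ext δ
      intro w
      show φ₀ (op (δ w) • m1) = bb * δ w
      obtain ⟨u, x, hu, hxmin, hwux⟩ := StmtSix.min_rep_decomp cs J w
      have hlen : cs.length (u * x) = cs.length u + cs.length x :=
        StmtSix.length_mul_of_min cs hxmin hu
      have hδw : δ w = δ u * δ x := by rw [hwux, hmul u x hlen]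
      rw [hδw, op_mul, mul_smul, hmu u hu, StmtSix.op_smul_comm' H MM _ _ _]
      rw [show op (δ x) • m1 = bas ⟨x, hxmin⟩ from (hbas ⟨x, hxmin⟩).symm]
      rw [map_smul, hφ₀bas ⟨x, hxmin⟩]
      rw [← mul_assoc, hbu u hu, smul_mul_assoc]
    intro h
    have := LinearMap.congr_fun heq h
    exact this
  have key2 : ∀ (a : Hᵐᵒᵖ) (m : MM), φ₀ (a • m) = φ₀ m * a.unop := by
    intro a m
    obtain ⟨g, rfl⟩ := hgen m
    have h1 : a • (op g • m1) = op (g * a.unop) • m1 := by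
      rw [← mul_smul, op_mul, op_unop]
    rw [h1, key1, key1, mul_assoc]
  set φ : MM →ₗ[Hᵐᵒᵖ] H :=
    { toFun := φ₀,
      map_add' := φ₀.map_add,
      map_smul' := fun a m => by
        show φ₀ (a • m) = a • φ₀ m
        rw [key2]
        rfl } with hφdef
  have hφm1 : φ m1 = bb := by
    show φ₀ m1 = bb
    rw [← hm1, hφ₀bas]
    show bb * δ 1 = bb
    rw [hδ1, mul_one]
  -- expansion and linear independence
  have hexp : ∀ x : ι, bb * δ x.1 = ∑ u : Subgroup.closure (cs.simple '' J),
      (T (L - (cs.length (u : W) : ℤ)) : LaurentPolynomial ℤ) • δ ((u : W) * x.1) := by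
    intro x
    rw [hbbdef, Finset.sum_mul]
    apply Finset.sum_congr rfl
    intro u _
    rw [smul_mul_assoc, hmul (u : W) x.1 (StmtSix.length_mul_of_min cs x.2 u.2)]
  have hb_ind : LinearIndependent (LaurentPolynomial ℤ) (fun x : ι => bb * δ x.1) := by
    rw [linearIndependent_iff]
    intro l hl
    refine Finsupp.ext fun x₀ => ?_
    have hinner : ∀ x : ι, (δ.repr (bb * δ x.1)) x₀.1
        = if x = x₀ then T L else 0 := by
      intro x
      rw [hexp x, map_sum, Finsupp.finset_sum_apply]
      have hterm : ∀ u : Subgroup.closure (cs.simple '' J), (δ.repr ((T (L - (cs.length (u : W) : ℤ)) : LaurentPolynomial ℤ)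
          • δ ((u : W) * x.1))) x₀.1
          = (T (L - (cs.length (u : W) : ℤ)) : LaurentPolynomial ℤ)
            * (if (u : W) * x.1 = x₀.1 then 1 else 0) := by
        intro u
        rw [map_smul, Finsupp.smul_apply, Module.Basis.repr_self, smul_eq_mul, Finsupp.single_apply]
      rw [Finset.sum_congr rfl (fun u _ => hterm u)]
      by_cases hxx : x = x₀
      · subst hxx
        rw [if_pos rfl]
        rw [Finset.sum_eq_single_of_mem (1 : Subgroup.closure (cs.simple '' J)) (Finset.mem_univ _)]
        · rw [if_pos (by rw [OneMemClass.coe_one, one_mul]), mul_one, OneMemClass.coe_one,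
            cs.length_one]
          norm_num
        · intro u _ hune
          rw [if_neg, mul_zero]
          intro hc
          have := (StmtSix.min_rep_unique cs x.2 x.2 u.2 hc.symm).1
          exact hune (by ext; rw [this, OneMemClass.coe_one])
      · rw [if_neg hxx]
        apply Finset.sum_eq_zero
        intro u _
        rw [if_neg, mul_zero]
        intro hc
        have := (StmtSix.min_rep_unique cs x.2 x₀.2 u.2 hc.symm).2
        exact hxx (Subtype.ext this.symm)
    rw [Finsupp.linearCombination_apply] at hl
    have h0 := congrArg (fun z => (δ.repr z) x₀.1) hl
    simp only [map_zero, Finsupp.zero_apply] at h0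
    rw [Finsupp.sum, map_sum, Finsupp.finset_sum_apply] at h0
    have h1 : ∀ x ∈ l.support, (δ.repr (l x • (bb * δ x.1))) x₀.1
        = if x = x₀ then l x * T L else 0 := by
      intro x _
      rw [map_smul, Finsupp.smul_apply, smul_eq_mul, hinner x, mul_ite, mul_zero]
    rw [Finset.sum_congr rfl h1, Finset.sum_ite_eq' l.support x₀ (fun x => l x * T L)] at h0
    by_cases hmem : x₀ ∈ l.support
    · rw [if_pos hmem] at h0
      exact ((isUnit_T L).mul_left_eq_zero).mp h0
    · exact Finsupp.notMem_support_iff.mp hmem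
  have hker : ∀ m : MM, φ₀ m = 0 → m = 0 := by
    intro m hm
    have hrepr := bas.linearCombination_repr m
    rw [← hrepr, Finsupp.apply_linearCombination] at hm
    have hfun : (⇑φ₀ ∘ ⇑bas) = fun x => bb * δ x.1 := funext hφ₀bas
    rw [hfun] at hm
    have hl0 := linearIndependent_iff.mp hb_ind _ hm
    rw [← hrepr, hl0, map_zero]
  have hinj : Function.Injective φ := by
    intro m m' h
    have hsub : φ₀ (m - m') = 0 := by
      rw [map_sub]
      have : φ₀ m = φ₀ m' := h
      rw [this, sub_self]
    exact sub_eq_zero.mp (hker _ hsub)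
  have hrange : LinearMap.range φ = Submodule.span Hᵐᵒᵖ {bb} := by
    have htop : (⊤ : Submodule Hᵐᵒᵖ MM) = Submodule.span Hᵐᵒᵖ {m1} := by
      apply _root_.le_antisymm
      · intro m _
        obtain ⟨h, rfl⟩ := hgen m
        exact Submodule.smul_mem _ _ (Submodule.mem_span_singleton_self m1)
      · exact le_top
    rw [← Submodule.map_top, htop, Submodule.map_span, Set.image_singleton, hφm1]
  exact ⟨⟨φ, hφm1, hinj, hrange⟩, hb_ind⟩
end

section
/- Define the bilinear form ⟨·,·⟩_M on the spherical module M(J) ≅ b_{w_J}H by ⟨h₁, h₂⟩_M := (v^{−d_J}/π(J))·ε(i(h₁)·h₂), where d_J = ℓ(w_J), π(J) is the Hilbert polynomial, ε the standard trace, and i the standard anti-involution. Then the standard basis {m_x : x ∈ ᴶW} of M(J) is orthonormal: ⟨m_x, m_y⟩_M = 1 if x = y and 0 otherwise. -/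
open CoxeterSystem List
open scoped Classical

namespace Stmt8Aux

variable {B W : Type} [Group W] {M : CoxeterMatrix B} (cs : CoxeterSystem M W)

local prefix:100 "σ" => cs.simple
local prefix:100 "π" => cs.wordProd
local prefix:100 "ℓ" => cs.length

private lemma zmod2_add_self : ∀ x : ZMod 2, x + x = 0 := by decide

/-- the basic involution on `W × ZMod 2` attached to a simple reflection -/
noncomputable def phi (i : B) : Equiv.Perm (W × ZMod 2) :=
  Function.Involutive.toPerm
    (fun p => (σ i * p.1 * σ i, p.2 + if p.1 = σ i then 1 else 0)) (by
      rintro ⟨w, e⟩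
      have h1 : σ i * (σ i * w * σ i) * σ i = w := by
        rw [← mul_assoc, ← mul_assoc, cs.simple_mul_simple_self, one_mul, mul_assoc,
          cs.simple_mul_simple_self, mul_one]
      have h2 : (σ i * w * σ i = σ i) ↔ (w = σ i) := by
        constructor
        · intro h
          have := congrArg (fun z => σ i * z * σ i) h
          simpa [h1, ← mul_assoc, cs.simple_mul_simple_self] using this
        · rintro rfl; rw [cs.simple_mul_simple_self, one_mul]
      simp only [h1, h2, Prod.mk.injEq, true_and]
      rcases eq_or_ne w (σ i) with h | h
      · simp only [h, if_true]
        rw [add_assoc, show (1:ZMod 2) + 1 = 0 by decide, add_zero]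
      · simp [h])

lemma phi_apply (i : B) (w : W) (e : ZMod 2) :
    phi cs i (w, e) = (σ i * w * σ i, e + if w = σ i then 1 else 0) := rfl

lemma phi_liftable : M.IsLiftable (fun i => phi cs i) := by
  intro i j
  set m := M i j with hm
  rcases Nat.eq_zero_or_pos m with hm0 | hmpos
  · rw [hm0, pow_zero]
  set u : W := σ j * σ i with hu
  have huinv : u⁻¹ = σ i * σ j := by
    rw [hu, mul_inv_rev, cs.inv_simple, cs.inv_simple]
  have hum : u ^ m = 1 := by
    rw [hu, hm]; exact cs.simple_mul_simple_pow' i j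
  have hjj := cs.simple_mul_simple_self j
  have hii := cs.simple_mul_simple_self i
  have hconjj : ∀ q : ℕ, σ j * u ^ q * σ j = (u ^ q)⁻¹ := by
    intro q
    have h1 : MulAut.conj (σ j) u = u⁻¹ := by
      show σ j * u * (σ j)⁻¹ = u⁻¹
      rw [cs.inv_simple, hu, huinv]
      simp only [← mul_assoc]
      rw [hjj, one_mul]
    have h2 : MulAut.conj (σ j) (u ^ q) = (u ^ q)⁻¹ := by
      rw [map_pow, h1, inv_pow]
    have h3 : σ j * u ^ q * (σ j)⁻¹ = (u ^ q)⁻¹ := h2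
    rwa [cs.inv_simple] at h3
  have hconji : ∀ q : ℕ, σ i * u ^ q * σ i = (u ^ q)⁻¹ := by
    intro q
    have h1 : MulAut.conj (σ i) u = u⁻¹ := by
      show σ i * u * (σ i)⁻¹ = u⁻¹
      rw [cs.inv_simple, hu, huinv]
      simp only [← mul_assoc]
      rw [mul_assoc (σ i * σ j) (σ i) (σ i), hii, mul_one]
    have h2 : MulAut.conj (σ i) (u ^ q) = (u ^ q)⁻¹ := by
      rw [map_pow, h1, inv_pow]
    have h3 : σ i * u ^ q * (σ i)⁻¹ = (u ^ q)⁻¹ := h2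
    rwa [cs.inv_simple] at h3
  have hfixj : ∀ q : ℕ, u ^ (q + q) = 1 → u ^ q * σ j * (u ^ q)⁻¹ = σ j := by
    intro q h2q
    rw [show (u ^ q)⁻¹ = σ j * u ^ q * σ j from (hconjj q).symm]
    simp only [← mul_assoc]
    rw [mul_assoc (u ^ q) (σ j) (σ j), hjj, mul_one, ← pow_add, h2q, one_mul]
  have hfixi : ∀ q : ℕ, u ^ (q + q) = 1 → u ^ q * σ i * (u ^ q)⁻¹ = σ i := by
    intro q h2q
    rw [show (u ^ q)⁻¹ = σ i * u ^ q * σ i from (hconji q).symm]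
    simp only [← mul_assoc]
    rw [mul_assoc (u ^ q) (σ i) (σ i), hii, mul_one, ← pow_add, h2q, one_mul]
  set a : ℕ → W := fun r => u ^ r * σ j * (u ^ r)⁻¹ with ha
  set b : ℕ → W := fun r => u ^ r * (σ j * σ i * σ j) * (u ^ r)⁻¹ with hb
  have hpowmod : ∀ n : ℕ, u ^ (n % m) = u ^ n := by
    intro n
    conv_rhs => rw [← Nat.div_add_mod n m]
    rw [pow_add, pow_mul, hum, one_pow, one_mul]
  -- iteration formula
  have hpow : ∀ (k : ℕ) (w : W) (e : ZMod 2),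
      ((phi cs i * phi cs j) ^ k) (w, e) =
        ((σ i * σ j) ^ k * w * (σ j * σ i) ^ k,
          e + ∑ r ∈ Finset.range k,
            ((if w = a r then 1 else 0) + (if w = b r then 1 else 0))) := by
    intro k
    induction k with
    | zero => intro w e; simp
    | succ k ih =>
      intro w e
      rw [pow_succ', Equiv.Perm.mul_apply, ih, Equiv.Perm.mul_apply, phi_apply, phi_apply]
      have hik : (σ i * σ j) ^ k = (u ^ k)⁻¹ := by
        rw [← huinv, inv_pow]
      have hjk : (σ j * σ i) ^ k = u ^ k := by rw [← hu]
      have key : ∀ c : W, ((σ i * σ j) ^ k * w * (σ j * σ i) ^ k = c)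
          ↔ (w = u ^ k * c * (u ^ k)⁻¹) := by
        intro c
        rw [hik, hjk]
        constructor
        · intro h; rw [← h]; group
        · intro h; rw [h]; group
      have hc2 : ∀ v : W, (σ j * v * σ j = σ i) ↔ (v = σ j * σ i * σ j) := by
        intro v
        constructor
        · intro h
          have := congrArg (fun z => σ j * z * σ j) h
          rw [← this]
          simp only [← mul_assoc]
          rw [hjj, one_mul, mul_assoc v (σ j) (σ j), hjj, mul_one]
        · rintro rfl
          simp only [← mul_assoc]
          rw [hjj, one_mul, mul_assoc (σ i) (σ j) (σ j), hjj, mul_one]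
      rw [Prod.mk.injEq]
      constructor
      · show σ i * (σ j * ((σ i * σ j) ^ k * w * (σ j * σ i) ^ k) * σ j) * σ i
          = (σ i * σ j) ^ (k+1) * w * (σ j * σ i) ^ (k+1)
        rw [pow_succ (σ j * σ i) k, pow_succ' (σ i * σ j) k]
        group
      · show (e + _) + _ + _ = e + _
        rw [Finset.sum_range_succ]
        have e1 : (if (σ i * σ j) ^ k * w * (σ j * σ i) ^ k = σ j then (1:ZMod 2) else 0)
            = (if w = a k then 1 else 0) := by
          congr 1
          rw [eq_iff_iff, key (σ j), ha]
        have e2 : (if σ j * ((σ i * σ j) ^ k * w * (σ j * σ i) ^ k) * σ j = σ i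
              then (1:ZMod 2) else 0)
            = (if w = b k then 1 else 0) := by
          congr 1
          rw [eq_iff_iff, hc2, key (σ j * σ i * σ j), hb]
        rw [e1, e2]
        ring
  apply Equiv.ext
  rintro ⟨w, e⟩
  rw [hpow m w e]
  have h1 : (σ i * σ j) ^ m = 1 := by rw [hm]; exact cs.simple_mul_simple_pow i j
  have h2 : (σ j * σ i) ^ m = 1 := by rw [← hu]; exact hum
  rw [h1, h2, one_mul, mul_one]
  show (w, _) = (w, e)
  suffices hsum : (∑ r ∈ Finset.range m,
      ((if w = a r then (1:ZMod 2) else 0) + (if w = b r then 1 else 0))) = 0 by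
    rw [hsum, add_zero]
  rw [Finset.sum_add_distrib]
  rcases Nat.even_or_odd m with ⟨h, hh⟩ | ⟨h, hh⟩
  · -- m = h + h  (h ≥ 1):  each sum vanishes by the involution r ↦ r ± h
    have hhpos : 0 < h := by omega
    have h2h : u ^ (h + h) = 1 := by rw [← hh, hum]
    have hfj : u ^ h * σ j * (u ^ h)⁻¹ = σ j := hfixj h h2h
    have hfb : u ^ h * (σ j * σ i * σ j) * (u ^ h)⁻¹ = σ j * σ i * σ j := by
      have expand : u ^ h * (σ j * σ i * σ j) * (u ^ h)⁻¹
          = (u ^ h * σ j * (u ^ h)⁻¹) * (u ^ h * σ i * (u ^ h)⁻¹)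
            * (u ^ h * σ j * (u ^ h)⁻¹) := by group
      rw [expand, hfj, hfixi h h2h]
    have pera : ∀ r : ℕ, a (r + h) = a r := by
      intro r
      rw [ha]
      simp only
      rw [pow_add]
      have expand : u ^ r * u ^ h * σ j * (u ^ r * u ^ h)⁻¹
          = u ^ r * (u ^ h * σ j * (u ^ h)⁻¹) * (u ^ r)⁻¹ := by group
      rw [expand, hfj]
    have perb : ∀ r : ℕ, b (r + h) = b r := by
      intro r
      rw [hb]
      simp only
      rw [pow_add]
      have expand : u ^ r * u ^ h * (σ j * σ i * σ j) * (u ^ r * u ^ h)⁻¹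
          = u ^ r * (u ^ h * (σ j * σ i * σ j) * (u ^ h)⁻¹) * (u ^ r)⁻¹ := by group
      rw [expand, hfb]
    have inv0 : ∀ (c : ℕ → W), (∀ r, c (r + h) = c r) →
        (∑ r ∈ Finset.range m, (if w = c r then (1:ZMod 2) else 0)) = 0 := by
      intro c hc
      apply Finset.sum_involution (g := fun r _ => if r < h then r + h else r - h)
      · intro r hr
        have hcr : c (if r < h then r + h else r - h) = c r := by
          by_cases hrh : r < h
          · simp only [if_pos hrh]; exact hc r
          · simp only [if_neg hrh]
            conv_rhs => rw [show r = (r - h) + h by omega]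
            exact (hc (r - h)).symm
        rw [hcr]
        exact zmod2_add_self _
      · intro r hr _
        simp only [Finset.mem_range] at hr
        by_cases hrh : r < h
        · simp only [if_pos hrh]; omega
        · simp only [if_neg hrh]; omega
      · intro r hr
        simp only [Finset.mem_range] at hr ⊢
        by_cases hrh : r < h
        · simp only [if_pos hrh]; omega
        · simp only [if_neg hrh]; omega
      · intro r hr
        simp only [Finset.mem_range] at hr
        by_cases hrh : r < h
        · simp only [if_pos hrh]
          have hn : ¬ (r + h < h) := by omega
          simp only [if_neg hn]; omega
        · simp only [if_neg hrh]
          have hp : r - h < h := by omega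
          simp only [if_pos hp]; omega
    rw [inv0 a pera, inv0 b perb, add_zero]
  · -- m = 2h + 1: the two sums are equal, so they cancel
    have hq : ∀ r, b r = a ((r + (h + 1)) % m) := by
      intro r
      have amod : a ((r + (h + 1)) % m) = a (r + (h + 1)) := by
        rw [ha]; simp only; rw [hpowmod]
      rw [amod, ha, hb]
      simp only
      have key : u ^ (h + 1) * σ j * (u ^ (h + 1))⁻¹ = σ j * σ i * σ j := by
        rw [show (u ^ (h+1))⁻¹ = σ j * u ^ (h+1) * σ j from (hconjj (h+1)).symm]
        simp only [← mul_assoc]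
        rw [mul_assoc (u ^ (h+1)) (σ j) (σ j), hjj, mul_one, ← pow_add]
        rw [show (h + 1) + (h + 1) = m + 1 by omega, pow_succ, hum, one_mul, hu]
      rw [pow_add]
      have expand : u ^ r * u ^ (h+1) * σ j * (u ^ r * u ^ (h+1))⁻¹
          = u ^ r * (u ^ (h+1) * σ j * (u ^ (h+1))⁻¹) * (u ^ r)⁻¹ := by group
      rw [expand, key]
    have heq : (∑ r ∈ Finset.range m, (if w = b r then (1:ZMod 2) else 0))
        = ∑ r ∈ Finset.range m, (if w = a r then (1:ZMod 2) else 0) := by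
      rw [Finset.sum_congr rfl (fun r _ => by rw [hq r])]
      apply Finset.sum_nbij' (i := fun r => (r + (h + 1)) % m)
        (j := fun r => (r + (m - (h + 1))) % m)
      · intro r hr
        simp only [Finset.mem_range] at hr ⊢
        exact Nat.mod_lt _ hmpos
      · intro r hr
        simp only [Finset.mem_range] at hr ⊢
        exact Nat.mod_lt _ hmpos
      · intro r hr
        simp only [Finset.mem_range] at hr
        rw [Nat.mod_add_mod, show r + (h + 1) + (m - (h + 1)) = r + m by omega,
          Nat.add_mod_right, Nat.mod_eq_of_lt hr]
      · intro r hr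
        simp only [Finset.mem_range] at hr
        rw [Nat.mod_add_mod, show r + (m - (h + 1)) + (h + 1) = r + m by omega,
          Nat.add_mod_right, Nat.mod_eq_of_lt hr]
      · intro r hr; rfl
    rw [heq]
    exact zmod2_add_self _

end Stmt8Aux

open CoxeterSystem List
open scoped Classical

namespace Stmt8Aux

variable {B W : Type} [Group W] {M : CoxeterMatrix B} (cs : CoxeterSystem M W)

local prefix:100 "σ" => cs.simple
local prefix:100 "π" => cs.wordProd
local prefix:100 "ℓ" => cs.length

noncomputable def FF : W →* Equiv.Perm (W × ZMod 2) :=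
  cs.lift ⟨fun i => phi cs i, phi_liftable cs⟩

lemma FF_simple (i : B) : FF cs (σ i) = phi cs i :=
  cs.lift_apply_simple (phi_liftable cs) i

lemma FF_wordProd (ω : List B) (t : W) (e : ZMod 2) :
    FF cs (π ω) (t, e) = (π ω * t * (π ω)⁻¹,
      e + ((cs.rightInvSeq ω).count t : ZMod 2)) := by
  induction ω generalizing e with
  | nil => simp [wordProd_nil]
  | cons i ω ih =>
    rw [wordProd_cons, map_mul, Equiv.Perm.mul_apply, ih, FF_simple, phi_apply, Prod.mk.injEq]
    constructor
    · rw [mul_inv_rev, cs.inv_simple]; group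
    · have hris : cs.rightInvSeq (i :: ω) = ((π ω)⁻¹ * σ i * π ω) :: cs.rightInvSeq ω := rfl
      rw [hris, List.count_cons]
      have hcond : (π ω * t * (π ω)⁻¹ = σ i) ↔ (((π ω)⁻¹ * σ i * π ω) == t) = true := by
        rw [beq_iff_eq]
        constructor
        · intro h; rw [← h]; group
        · intro h; rw [← h]; group
      push_cast
      rw [add_assoc]
      congr 1
      congr 1
      exact if_congr hcond rfl rfl

/-- `nu cs w t` is the mod-2 number of times `t` occurs in a right inversion sequence
of a word for `w`. -/
noncomputable def nu (w t : W) : ZMod 2 := (FF cs w (t, 0)).2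

lemma nu_wordProd (ω : List B) (t : W) :
    nu cs (π ω) t = ((cs.rightInvSeq ω).count t : ZMod 2) := by
  rw [nu, FF_wordProd]; simp

lemma FF_apply (w t : W) (e : ZMod 2) :
    FF cs w (t, e) = (w * t * w⁻¹, e + nu cs w t) := by
  obtain ⟨ω, -, rfl⟩ := cs.exists_reduced_word' w
  rw [FF_wordProd, nu_wordProd]

lemma nu_mul (w₁ w₂ t : W) :
    nu cs (w₁ * w₂) t = nu cs w₂ t + nu cs w₁ (w₂ * t * w₂⁻¹) := by
  have : FF cs (w₁ * w₂) (t, 0) = FF cs w₁ (FF cs w₂ (t, 0)) := by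
    rw [map_mul, Equiv.Perm.mul_apply]
  rw [nu, this, FF_apply cs w₂, FF_apply cs w₁]
  simp

lemma FF_refl_self {t : W} (ht : cs.IsReflection t) (e : ZMod 2) :
    FF cs t (t, e) = (t, e + 1) := by
  obtain ⟨q, i, rfl⟩ := ht
  have hfix : q⁻¹ * (q * σ i * q⁻¹) * q⁻¹⁻¹ = σ i := by group
  have h1 : ∀ e' : ZMod 2, FF cs q⁻¹ (q * σ i * q⁻¹, e')
      = (σ i, e' + nu cs q⁻¹ (q * σ i * q⁻¹)) := by
    intro e'; rw [FF_apply, hfix]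
  set c := nu cs q⁻¹ (q * σ i * q⁻¹) with hc
  have h2 : ∀ e' : ZMod 2, FF cs (σ i) ((σ i : W), e') = (σ i, e' + 1) := by
    intro e'
    rw [FF_simple, phi_apply, if_pos rfl]
    congr 1
    rw [cs.simple_mul_simple_self, one_mul]
  have h3 : ∀ e' : ZMod 2, FF cs q ((σ i : W), e')
      = (q * σ i * q⁻¹, e' + nu cs q (σ i)) := by
    intro e'; rw [FF_apply]
  have hdecomp : FF cs (q * σ i * q⁻¹) = FF cs q * FF cs (σ i) * FF cs q⁻¹ := by
    rw [← map_mul, ← map_mul]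
  have hcancel : c + nu cs q (σ i) = 0 := by
    have h0 : FF cs q (FF cs q⁻¹ (q * σ i * q⁻¹, (0:ZMod 2))) = (q * σ i * q⁻¹, 0) := by
      rw [← Equiv.Perm.mul_apply, ← map_mul, mul_inv_cancel, map_one, Equiv.Perm.one_apply]
    rw [h1 0, h3 (0 + c)] at h0
    have h4 := congrArg Prod.snd h0
    simp only at h4
    rw [zero_add] at h4
    exact h4
  rw [hdecomp, Equiv.Perm.mul_apply, Equiv.Perm.mul_apply, h1 e, h2 (e + c), h3 (e + c + 1)]
  congr 1
  calc e + c + 1 + nu cs q (σ i) = e + 1 + (c + nu cs q (σ i)) := by ring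
    _ = e + 1 := by rw [hcancel, add_zero]

lemma nu_mul_refl {t : W} (ht : cs.IsReflection t) (w : W) :
    nu cs (w * t) t = nu cs w t + 1 := by
  have : FF cs (w * t) (t, 0) = FF cs w (FF cs t (t, 0)) := by
    rw [map_mul, Equiv.Perm.mul_apply]
  rw [nu, this, FF_refl_self cs ht, FF_apply]
  show (0:ZMod 2) + 1 + nu cs w t = nu cs w t + 1
  ring

lemma zmod2_cases (x : ZMod 2) : x = 0 ∨ x = 1 := by revert x; decide

lemma nu_eq_one_iff {t : W} (ht : cs.IsReflection t) (w : W) :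
    nu cs w t = 1 ↔ cs.IsRightInversion w t := by
  constructor
  · intro h
    obtain ⟨ω, hred, rfl⟩ := cs.exists_reduced_word' w
    rw [nu_wordProd] at h
    have hcount : (cs.rightInvSeq ω).count t ≠ 0 := by
      intro h0
      rw [h0] at h
      exact absurd h.symm (by decide)
    have hmem : t ∈ cs.rightInvSeq ω := by
      by_contra hm
      exact hcount (List.count_eq_zero.mpr hm)
    exact cs.isRightInversion_of_mem_rightInvSeq hred hmem
  · intro h
    rcases zmod2_cases (nu cs w t) with h0 | h1
    · exfalso
      have h1' : nu cs (w * t) t = 1 := by rw [nu_mul_refl cs ht, h0, zero_add]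
      obtain ⟨ω, hred, hw⟩ := cs.exists_reduced_word' (w * t)
      rw [hw, nu_wordProd] at h1'
      have hcount : (cs.rightInvSeq ω).count t ≠ 0 := by
        intro h0'
        rw [h0'] at h1'
        exact absurd h1'.symm (by decide)
      have hmem : t ∈ cs.rightInvSeq ω := by
        by_contra hm
        exact hcount (List.count_eq_zero.mpr hm)
      have hinv := cs.isRightInversion_of_mem_rightInvSeq hred hmem
      rw [← hw] at hinv
      have := hinv.2
      rw [mul_assoc, ht.mul_self, mul_one] at this
      exact absurd h.2 (by omega)
    · exact h1

lemma mem_rightInvSeq_iff {ω : List B} (hred : cs.IsReduced ω) (t : W) :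
    t ∈ cs.rightInvSeq ω ↔ cs.IsRightInversion (π ω) t := by
  constructor
  · exact cs.isRightInversion_of_mem_rightInvSeq hred
  · intro h
    have h1 : nu cs (π ω) t = 1 := (nu_eq_one_iff cs h.1 _).mpr h
    rw [nu_wordProd] at h1
    by_contra hm
    rw [List.count_eq_zero.mpr hm] at h1
    exact absurd h1.symm (by decide)

/-- The (right) exchange property. -/
lemma exchange_right {w : W} {i : B} (hlt : ℓ (w * σ i) < ℓ w) {ω : List B}
    (hred : cs.IsReduced ω) (hw : w = π ω) :
    ∃ j < ω.length, w * σ i = π (ω.eraseIdx j) := by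
  have hinv : cs.IsRightInversion w (σ i) := ⟨cs.isReflection_simple i, hlt⟩
  rw [hw] at hinv
  have hmem : σ i ∈ cs.rightInvSeq ω := (mem_rightInvSeq_iff cs hred _).mpr hinv
  obtain ⟨j, hj, hgetel⟩ := List.getElem_of_mem hmem
  rw [cs.length_rightInvSeq] at hj
  refine ⟨j, hj, ?_⟩
  have hgetd : (cs.rightInvSeq ω).getD j 1 = σ i := by
    rw [List.getD_eq_getElem _ _ (by rw [cs.length_rightInvSeq]; exact hj)]
    exact hgetel
  rw [hw, ← hgetd]
  exact cs.wordProd_mul_getD_rightInvSeq ω j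

end Stmt8Aux

namespace Stmt8Aux

open CoxeterSystem List
open scoped Classical

variable {B W : Type} [Group W] {M : CoxeterMatrix B} (cs : CoxeterSystem M W)

local prefix:100 "σ" => cs.simple
local prefix:100 "π" => cs.wordProd
local prefix:100 "ℓ" => cs.length

section Parabolic

variable {J : Set B} {WJ : Subgroup W}

lemma wordProd_mem (hWJ : WJ = Subgroup.closure (cs.simple '' J))
    {ω : List B} (hω : ∀ b ∈ ω, b ∈ J) : π ω ∈ WJ := by
  induction ω with
  | nil => rw [cs.wordProd_nil]; exact one_mem WJ
  | cons i ω ih =>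
    rw [cs.wordProd_cons]
    refine mul_mem ?_ (ih (fun b hb => hω b (List.mem_cons_of_mem i hb)))
    rw [hWJ]
    exact Subgroup.subset_closure ⟨i, hω i (List.mem_cons_self), rfl⟩

lemma exists_jword (hWJ : WJ = Subgroup.closure (cs.simple '' J))
    {w : W} (hw : w ∈ WJ) : ∃ ω : List B, (∀ b ∈ ω, b ∈ J) ∧ w = π ω := by
  rw [hWJ] at hw
  induction hw using Subgroup.closure_induction with
  | mem x hx =>
    obtain ⟨i, hi, rfl⟩ := hx
    exact ⟨[i], by simpa using hi, (cs.wordProd_singleton i).symm⟩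
  | one => exact ⟨[], by simp, (cs.wordProd_nil).symm⟩
  | mul x y _ _ ihx ihy =>
    obtain ⟨ω₁, hω₁, rfl⟩ := ihx
    obtain ⟨ω₂, hω₂, rfl⟩ := ihy
    exact ⟨ω₁ ++ ω₂, fun b hb => (List.mem_append.mp hb).elim (hω₁ b) (hω₂ b),
      (cs.wordProd_append ω₁ ω₂).symm⟩
  | inv x _ ihx =>
    obtain ⟨ω, hω, rfl⟩ := ihx
    exact ⟨ω.reverse, fun b hb => hω b (List.mem_reverse.mp hb),
      (cs.wordProd_reverse ω).symm⟩

private lemma reduce_jword : ∀ (n : ℕ) (ω : List B), ω.length = n → (∀ b ∈ ω, b ∈ J) →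
    ∃ ω' : List B, (∀ b ∈ ω', b ∈ J) ∧ π ω' = π ω ∧ cs.IsReduced ω' := by
  intro n
  induction n using Nat.strong_induction_on with
  | _ n ih =>
    intro ω hn hω
    by_cases hred : cs.IsReduced ω
    · exact ⟨ω, hω, rfl, hred⟩
    · have hne : ω ≠ [] := by
        rintro rfl
        exact hred (by simp [CoxeterSystem.IsReduced])
      have hlen1 : 1 ≤ ω.length := by
        cases ω with
        | nil => exact absurd rfl hne
        | cons a l => simp
      have hex : ∃ k, ¬ cs.IsReduced (ω.take (k+1)) := by
        refine ⟨ω.length - 1, ?_⟩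
        rw [show ω.length - 1 + 1 = ω.length by omega, List.take_length]
        exact hred
      set k := Nat.find hex with hkdef
      have hk : ¬ cs.IsReduced (ω.take (k+1)) := Nat.find_spec hex
      have hkle : k ≤ ω.length - 1 := by
        apply Nat.find_min' hex
        rw [show ω.length - 1 + 1 = ω.length by omega, List.take_length]
        exact hred
      have hklt : k < ω.length := by omega
      have hkred : cs.IsReduced (ω.take k) := by
        rcases Nat.eq_zero_or_pos k with h0 | hpos
        · rw [h0]
          simp [CoxeterSystem.IsReduced]
        · have := Nat.find_min hex (show k - 1 < k by omega)
          rw [show k - 1 + 1 = k by omega] at this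
          exact not_not.mp this
      have hlv : ℓ (π (ω.take k)) = k := by
        have := hkred
        rw [CoxeterSystem.IsReduced] at this
        rw [this, List.length_take]
        omega
      have htake : ω.take (k+1) = ω.take k ++ [ω[k]] := by
        rw [List.take_succ, List.getElem?_eq_getElem hklt]
        rfl
      have hπtake : π (ω.take (k+1)) = π (ω.take k) * σ (ω[k]) := by
        rw [htake, cs.wordProd_append, cs.wordProd_singleton]
      have hdesc : ℓ (π (ω.take k) * σ (ω[k])) < ℓ (π (ω.take k)) := by
        rcases cs.length_mul_simple (π (ω.take k)) (ω[k]) with hup | hdn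
        · exfalso
          apply hk
          rw [CoxeterSystem.IsReduced, hπtake, hup, List.length_take]
          omega
        · omega
      obtain ⟨j, hjlt, hvj⟩ := exchange_right cs hdesc hkred rfl
      set ω' : List B := (ω.take k).eraseIdx j ++ ω.drop (k+1) with hω'def
      have hπω' : π ω' = π ω := by
        rw [hω'def, cs.wordProd_append, ← hvj, ← hπtake, ← cs.wordProd_append,
          List.take_append_drop]
      have hlen_take : (ω.take k).length = k := by rw [List.length_take]; omega
      have hjlt' : j < k := by rwa [hlen_take] at hjlt
      have hlenω' : ω'.length = ω.length - 2 := by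
        rw [hω'def, List.length_append, List.length_eraseIdx, if_pos hjlt, hlen_take,
          List.length_drop]
        omega
      have hω'J : ∀ b ∈ ω', b ∈ J := by
        intro b hb
        rw [hω'def] at hb
        rcases List.mem_append.mp hb with h | h
        · exact hω b (List.take_subset k ω (List.eraseIdx_subset h))
        · exact hω b (List.drop_subset (k+1) ω h)
      obtain ⟨ω'', h1, h2, h3⟩ := ih (ω.length - 2) (by omega) ω' (hlenω') hω'J
      exact ⟨ω'', h1, by rw [h2, hπω'], h3⟩

lemma exists_reduced_jword (hWJ : WJ = Subgroup.closure (cs.simple '' J))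
    {w : W} (hw : w ∈ WJ) :
    ∃ ω : List B, (∀ b ∈ ω, b ∈ J) ∧ w = π ω ∧ cs.IsReduced ω := by
  obtain ⟨ω, hω, rfl⟩ := exists_jword cs hWJ hw
  obtain ⟨ω', h1, h2, h3⟩ := reduce_jword cs ω.length ω rfl hω
  exact ⟨ω', h1, h2.symm, h3⟩

lemma exists_rightDescent_J (hWJ : WJ = Subgroup.closure (cs.simple '' J))
    {w : W} (hw : w ∈ WJ) (hne : w ≠ 1) :
    ∃ i ∈ J, ℓ (w * σ i) + 1 = ℓ w ∧ w * σ i ∈ WJ := by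
  obtain ⟨ω, hωJ, hw', hred⟩ := exists_reduced_jword cs hWJ hw
  have hne' : ω ≠ [] := by
    rintro rfl
    rw [cs.wordProd_nil] at hw'
    exact hne hw'
  refine ⟨ω.getLast hne', hωJ _ (List.getLast_mem hne'), ?_, ?_⟩
  · have hsplit : ω.dropLast ++ [ω.getLast hne'] = ω := List.dropLast_append_getLast hne'
    have hπ : π ω.dropLast * σ (ω.getLast hne') = π ω := by
      have h := congrArg cs.wordProd hsplit
      rwa [cs.wordProd_append, cs.wordProd_singleton] at h
    have hws : w * σ (ω.getLast hne') = π ω.dropLast := by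
      rw [hw', ← hπ, cs.simple_mul_simple_cancel_right]
    have hlw : ℓ w = ω.length := by rw [hw']; exact hred
    have hlen : ℓ (w * σ (ω.getLast hne')) ≤ ω.length - 1 := by
      rw [hws]
      calc ℓ (π ω.dropLast) ≤ ω.dropLast.length := cs.length_wordProd_le _
        _ = ω.length - 1 := by rw [List.length_dropLast]
    have hlen1 : 1 ≤ ω.length := by
      cases ω with
      | nil => exact absurd rfl hne'
      | cons a l => simp
    rcases cs.length_mul_simple w (ω.getLast hne') with hup | hdn
    · omega
    · omega
  · have hsplit : ω.dropLast ++ [ω.getLast hne'] = ω := List.dropLast_append_getLast hne'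
    have hπ : π ω.dropLast * σ (ω.getLast hne') = π ω := by
      have h := congrArg cs.wordProd hsplit
      rwa [cs.wordProd_append, cs.wordProd_singleton] at h
    have hws : w * σ (ω.getLast hne') = π ω.dropLast := by
      rw [hw', ← hπ, cs.simple_mul_simple_cancel_right]
    rw [hws]
    exact wordProd_mem cs hWJ (fun b hb => hωJ b (List.dropLast_subset ω hb))

/-- additivity of lengths for products `z * u`, `u ∈ W_J`, when `z` is minimal in `z W_J`. -/
lemma min_coset_additive (hWJ : WJ = Subgroup.closure (cs.simple '' J))
    {z : W} (hz : ∀ u ∈ WJ, ℓ z ≤ ℓ (z * u)) :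
    ∀ u ∈ WJ, ℓ (z * u) = ℓ z + ℓ u := by
  have main : ∀ (n : ℕ) (u : W), u ∈ WJ → ℓ u = n → ℓ (z * u) = ℓ z + ℓ u := by
    intro n
    induction n using Nat.strong_induction_on with
    | _ n ih =>
      intro u huWJ hun
      rcases eq_or_ne u 1 with rfl | hne
      · simp
      · obtain ⟨i, hiJ, hlen, humem⟩ := exists_rightDescent_J cs hWJ huWJ hne
        set u' := u * σ i with hu'def
        have hu'u : u' * σ i = u := by
          rw [hu'def, cs.simple_mul_simple_cancel_right]
        have hlu' : ℓ u' + 1 = ℓ u := hlen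
        have ihu' : ℓ (z * u') = ℓ z + ℓ u' := by
          apply ih (ℓ u') (by omega) u' humem rfl
        have hzu : z * u = (z * u') * σ i := by
          rw [mul_assoc, hu'def, mul_assoc, cs.simple_mul_simple_self, mul_one]
        rcases cs.length_mul_simple (z * u') i with hup | hdn
        · rw [hzu, hup, ihu']; omega
        · -- descent case: contradiction via the exchange property
          exfalso
          -- get reduced words
          obtain ⟨ω₂, hred₂, hw₂⟩ := cs.exists_reduced_word' z
          obtain ⟨ω₁, hω₁J, hw₁, hred₁⟩ := exists_reduced_jword cs hWJ humem
          have hcat : z * u' = π (ω₂ ++ ω₁) := by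
            rw [cs.wordProd_append, ← hw₂, ← hw₁]
          have hredcat : cs.IsReduced (ω₂ ++ ω₁) := by
            rw [CoxeterSystem.IsReduced, ← hcat, ihu', List.length_append]
            rw [CoxeterSystem.IsReduced] at hred₂ hred₁
            rw [← hw₂] at hred₂
            rw [← hw₁] at hred₁
            omega
          have hdesc : ℓ ((z * u') * σ i) < ℓ (z * u') := by omega
          obtain ⟨j, hjlt, hex⟩ := exchange_right cs hdesc hredcat hcat
          rcases Nat.lt_or_ge j ω₂.length with hcase | hcase
          · -- erase inside the z-part: contradicts minimality of z
            rw [List.eraseIdx_append_of_lt_length hcase, cs.wordProd_append, ← hw₁] at hex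
            have hznew : z * (u' * σ i * u'⁻¹) = π (ω₂.eraseIdx j) := by
              rw [← mul_assoc, ← mul_assoc, hex]
              group
            have hmem' : u' * σ i * u'⁻¹ ∈ WJ := by
              refine mul_mem (mul_mem humem ?_) (inv_mem humem)
              rw [hWJ]
              exact Subgroup.subset_closure ⟨i, hiJ, rfl⟩
            have h1 := hz _ hmem'
            rw [hznew] at h1
            have h2 : ℓ (π (ω₂.eraseIdx j)) ≤ (ω₂.eraseIdx j).length :=
              cs.length_wordProd_le _
            have h3 : (ω₂.eraseIdx j).length = ω₂.length - 1 := by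
              rw [List.length_eraseIdx, if_pos hcase]
            have h4 : ℓ z = ω₂.length := by rw [hw₂]; exact hred₂
            omega
          · -- erase inside the u'-part: contradicts the length of u
            rw [List.length_append] at hjlt
            rw [List.eraseIdx_append_of_length_le hcase, cs.wordProd_append, ← hw₂] at hex
            have hunew : u' * σ i = π (ω₁.eraseIdx (j - ω₂.length)) := by
              have := hex
              rw [mul_assoc] at this
              exact mul_left_cancel this
            have h2 : ℓ (u' * σ i) ≤ (ω₁.eraseIdx (j - ω₂.length)).length := by
              rw [hunew]; exact cs.length_wordProd_le _
            have h3 : (ω₁.eraseIdx (j - ω₂.length)).length ≤ ω₁.length - 1 := by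
              rw [List.length_eraseIdx]
              split <;> omega
            have h4 : ℓ u' = ω₁.length := by rw [hw₁]; exact hred₁
            rw [hu'u] at h2
            omega
  intro u hu
  exact main (ℓ u) u hu rfl

end Parabolic

end Stmt8Aux

namespace Stmt8Aux

open CoxeterSystem List
open scoped Classical

variable {B W : Type} [Group W] {M : CoxeterMatrix B} (cs : CoxeterSystem M W)

local prefix:100 "σ" => cs.simple
local prefix:100 "π" => cs.wordProd
local prefix:100 "ℓ" => cs.length

section Parabolic2

variable {J : Set B} {WJ : Subgroup W}

lemma ris_mem_WJ (hWJ : WJ = Subgroup.closure (cs.simple '' J))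
    {ω : List B} (hω : ∀ b ∈ ω, b ∈ J) :
    ∀ t ∈ cs.rightInvSeq ω, t ∈ WJ ∧ cs.IsReflection t := by
  induction ω with
  | nil => simp
  | cons i ω ih =>
    intro t ht
    have hris : cs.rightInvSeq (i :: ω) = ((π ω)⁻¹ * σ i * π ω) :: cs.rightInvSeq ω := rfl
    rw [hris, List.mem_cons] at ht
    have htail : ∀ b ∈ ω, b ∈ J := fun b hb => hω b (List.mem_cons_of_mem i hb)
    rcases ht with rfl | ht
    · have hπ : π ω ∈ WJ := wordProd_mem cs hWJ htail
      have hsi : σ i ∈ WJ := by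
        rw [hWJ]
        exact Subgroup.subset_closure ⟨i, hω i (List.mem_cons_self), rfl⟩
      constructor
      · exact mul_mem (mul_mem (inv_mem hπ) hsi) hπ
      · have h := (cs.isReflection_simple i).conj (π ω)⁻¹
        rwa [inv_inv] at h
    · exact ih htail t ht

lemma pal (hWJ : WJ = Subgroup.closure (cs.simple '' J))
    {wJ : W} (hwJmem : wJ ∈ WJ) (hwJmax : ∀ u ∈ WJ, ℓ u ≤ ℓ wJ) :
    ∀ u ∈ WJ, ℓ (wJ * u) + ℓ u = ℓ wJ := by
  obtain ⟨ωJ, hωJJ, hwJw, hredJ⟩ := exists_reduced_jword cs hWJ hwJmem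
  set RJ : Finset W := (cs.rightInvSeq ωJ).toFinset with hRJ
  have hcard : RJ.card = ℓ wJ := by
    rw [hRJ, List.toFinset_card_of_nodup hredJ.nodup_rightInvSeq, cs.length_rightInvSeq]
    rw [hwJw]
    exact hredJ.symm
  have hmemRJ : ∀ t : W, t ∈ RJ ↔ (t ∈ WJ ∧ cs.IsReflection t) := by
    intro t
    constructor
    · intro ht
      exact ris_mem_WJ cs hWJ hωJJ t (List.mem_toFinset.mp ht)
    · rintro ⟨htW, htR⟩
      rw [hRJ, List.mem_toFinset, mem_rightInvSeq_iff cs hredJ, ← hwJw]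
      refine ⟨htR, ?_⟩
      have h1 : ℓ (wJ * t) ≠ ℓ wJ := htR.length_mul_left_ne wJ
      have h2 : ℓ (wJ * t) ≤ ℓ wJ := hwJmax _ (mul_mem hwJmem htW)
      omega
  have hInvwJ : ∀ t ∈ RJ, cs.IsRightInversion wJ t := by
    intro t ht
    rw [hwJw]
    exact cs.isRightInversion_of_mem_rightInvSeq hredJ (List.mem_toFinset.mp ht)
  have hlen : ∀ w ∈ WJ, ℓ w = (RJ.filter (fun t => cs.IsRightInversion w t)).card := by
    intro w hw
    obtain ⟨ω, hωJ', hw', hred⟩ := exists_reduced_jword cs hWJ hw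
    have h1 : ℓ w = ((cs.rightInvSeq ω).toFinset).card := by
      rw [List.toFinset_card_of_nodup hred.nodup_rightInvSeq, cs.length_rightInvSeq, hw']
      exact hred
    rw [h1]
    congr 1
    ext t
    rw [List.mem_toFinset, Finset.mem_filter]
    constructor
    · intro hmem0
      have h2 := ris_mem_WJ cs hWJ hωJ' t hmem0
      have h3 : cs.IsRightInversion w t := by
        rw [hw']
        exact cs.isRightInversion_of_mem_rightInvSeq hred hmem0
      exact ⟨(hmemRJ t).mpr h2, h3⟩
    · rintro ⟨ht, hinv⟩
      rw [hw'] at hinv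
      exact (mem_rightInvSeq_iff cs hred t).mpr hinv
  intro u hu
  have hwu : wJ * u ∈ WJ := mul_mem hwJmem hu
  have key : ∀ t ∈ RJ, (cs.IsRightInversion (wJ * u) t ↔ ¬ cs.IsRightInversion u t) := by
    intro t ht
    obtain ⟨htW, htR⟩ := (hmemRJ t).mp ht
    have hconj : u * t * u⁻¹ ∈ RJ :=
      (hmemRJ _).mpr ⟨mul_mem (mul_mem hu htW) (inv_mem hu), htR.conj u⟩
    have h1 : nu cs wJ (u * t * u⁻¹) = 1 :=
      (nu_eq_one_iff cs (htR.conj u) wJ).mpr (hInvwJ _ hconj)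
    have h2 : nu cs (wJ * u) t = nu cs u t + 1 := by
      rw [nu_mul, h1]
    rw [← nu_eq_one_iff cs htR, ← nu_eq_one_iff cs htR, h2]
    rcases zmod2_cases (nu cs u t) with h0 | h1'
    · rw [h0]; decide
    · rw [h1']; decide
  have hfilter : RJ.filter (fun t => cs.IsRightInversion (wJ * u) t)
      = RJ.filter (fun t => ¬ cs.IsRightInversion u t) := Finset.filter_congr key
  rw [hlen _ hwu, hlen _ hu, hfilter, ← hcard, add_comm]
  exact Finset.card_filter_add_card_filter_not _

end Parabolic2

end Stmt8Aux

namespace Stmt8Aux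

open CoxeterSystem List LaurentPolynomial
open scoped Classical

variable {B W : Type} [Group W] {M : CoxeterMatrix B} (cs : CoxeterSystem M W)

local prefix:100 "σ" => cs.simple
local prefix:100 "π" => cs.wordProd
local prefix:100 "ℓ" => cs.length

section Hecke

variable {H : Type} [Ring H] [Algebra (LaurentPolynomial ℤ) H]
  (δ : Module.Basis W (LaurentPolynomial ℤ) H)

/-- the standard pairing: the coefficient of `δ 1` in `δ a * δ b` is `1` iff `b = a⁻¹`. -/
lemma pairing (hδ1 : δ 1 = 1)
    (hmul : ∀ u w : W, ℓ (u * w) = ℓ u + ℓ w → δ u * δ w = δ (u * w))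
    (hquad : ∀ i : B, δ (σ i) * δ (σ i)
      = 1 + ((T (-1) - T 1 : LaurentPolynomial ℤ)) • δ (σ i)) :
    ∀ (b a : W), (δ.repr (δ a * δ b)) 1 = if b = a⁻¹ then 1 else 0 := by
  have main : ∀ (n : ℕ) (b a : W), ℓ b = n →
      (δ.repr (δ a * δ b)) 1 = if b = a⁻¹ then 1 else 0 := by
    intro n
    induction n using Nat.strong_induction_on with
    | _ n ih =>
      intro b a hbn
      rcases eq_or_ne b 1 with rfl | hne
      · rw [hδ1, mul_one, δ.repr_self, Finsupp.single_apply]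
        congr 1
        rw [eq_iff_iff]
        constructor
        · rintro rfl; rw [inv_one]
        · intro h
          have h2 : a⁻¹ = 1 := h.symm
          rw [inv_eq_one] at h2
          exact h2
      · obtain ⟨i, hdesc⟩ := cs.exists_leftDescent_of_ne_one hne
        rw [IsLeftDescent] at hdesc
        set b' := σ i * b with hb'def
        have hb' : σ i * b' = b := by rw [hb'def, cs.simple_mul_simple_cancel_left]
        have hlb' : ℓ b' + 1 = ℓ b := by
          rcases cs.length_simple_mul b i with hup | hdn
          · rw [← hb'def] at hup; omega
          · rw [← hb'def] at hdn; omega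
        have hsplit : δ (σ i) * δ b' = δ b := by
          rw [hmul (σ i) b' (by rw [cs.length_simple, hb']; omega), hb']
        have hiff : (b' = σ i * a⁻¹) ↔ (b = a⁻¹) := by
          constructor
          · intro h
            rw [← hb', h, cs.simple_mul_simple_cancel_left]
          · intro h
            rw [hb'def, h]
        rcases cs.length_mul_simple a i with hup | hdn
        · -- ascent at a
          have h1 : δ a * δ (σ i) = δ (a * σ i) :=
            hmul a (σ i) (by rw [cs.length_simple]; exact hup)
          rw [← hsplit, ← mul_assoc, h1, ih (ℓ b') (by omega) b' (a * σ i) rfl]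
          congr 1
          rw [eq_iff_iff, mul_inv_rev, cs.inv_simple, hiff]
        · -- descent at a
          set a' := a * σ i with ha'def
          have ha' : a' * σ i = a := by rw [ha'def, cs.simple_mul_simple_cancel_right]
          have hla' : ℓ a' + 1 = ℓ a := hdn
          have h1 : δ a' * δ (σ i) = δ a := by
            rw [hmul a' (σ i) (by rw [cs.length_simple, ha']; omega), ha']
          have h2 : δ a * δ (σ i) = δ a' + (T (-1) - T 1 : LaurentPolynomial ℤ) • δ a := by
            rw [← h1, mul_assoc, hquad i, mul_add, mul_one, mul_smul_comm, h1]
          rw [← hsplit, ← mul_assoc, h2, add_mul, smul_mul_assoc, map_add, map_smul,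
            Finsupp.add_apply, Finsupp.smul_apply, smul_eq_mul,
            ih (ℓ b') (by omega) b' a' rfl, ih (ℓ b') (by omega) b' a rfl]
          have hne2 : b' ≠ a⁻¹ := by
            intro h
            have e1 : ℓ b' = ℓ a := by rw [h, cs.length_inv]
            have e2 : b = a'⁻¹ := by
              rw [← hb', h, ha'def, mul_inv_rev, cs.inv_simple]
            have e3 : ℓ b = ℓ a' := by rw [e2, cs.length_inv]
            omega
          rw [if_neg hne2, mul_zero, add_zero]
          congr 1
          rw [eq_iff_iff, ha'def, mul_inv_rev, cs.inv_simple, hiff]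
  intro b a
  exact main (ℓ b) b a rfl

variable {J : Set B} {WJ : Subgroup W} [Fintype WJ]

/-- The element `b_{w_J}` (given a choice of `wJ`). -/
noncomputable def bb (wJ : W) : H :=
  ∑ u : WJ, (T ((ℓ wJ : ℤ) - (ℓ (u : W) : ℤ)) : LaurentPolynomial ℤ) • δ (u : W)

lemma bb_mul_simple (hWJ : WJ = Subgroup.closure (cs.simple '' J))
    (hmul : ∀ u w : W, ℓ (u * w) = ℓ u + ℓ w → δ u * δ w = δ (u * w))
    (hquad : ∀ i : B, δ (σ i) * δ (σ i)
      = 1 + ((T (-1) - T 1 : LaurentPolynomial ℤ)) • δ (σ i))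
    (wJ : W) {i : B} (hi : i ∈ J) :
    (bb cs δ (WJ := WJ) wJ) * δ (σ i)
      = (T (-1) : LaurentPolynomial ℤ) • (bb cs δ (WJ := WJ) wJ) := by
  set d : ℤ := (ℓ wJ : ℤ) with hd
  have hsiWJ : σ i ∈ WJ := by
    rw [hWJ]; exact Subgroup.subset_closure ⟨i, hi, rfl⟩
  set si : WJ := ⟨σ i, hsiWJ⟩ with hsi
  -- pairing helper
  have helper : ∀ v : W, ℓ (v * σ i) = ℓ v + 1 →
      ((T (d - (ℓ v : ℤ)) : LaurentPolynomial ℤ) • (δ v * δ (σ i))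
        - (T (d - (ℓ v : ℤ) - 1) : LaurentPolynomial ℤ) • δ v)
      + ((T (d - (ℓ (v * σ i) : ℤ)) : LaurentPolynomial ℤ) • (δ (v * σ i) * δ (σ i))
        - (T (d - (ℓ (v * σ i) : ℤ) - 1) : LaurentPolynomial ℤ) • δ (v * σ i)) = 0 := by
    intro v hup
    have h1 : δ v * δ (σ i) = δ (v * σ i) := hmul v (σ i) (by rw [cs.length_simple]; exact hup)
    have h2 : δ (v * σ i) * δ (σ i)
        = δ v + (T (-1) - T 1 : LaurentPolynomial ℤ) • δ (v * σ i) := by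
      rw [← h1, mul_assoc, hquad i, mul_add, mul_one, mul_smul_comm, h1]
    rw [h1, h2, hup]
    push_cast
    set lv : ℤ := (ℓ v : ℤ)
    have T1 : (T (d - lv - 1) : LaurentPolynomial ℤ) * (T (-1) - T 1)
        = T (d - lv - 2) - T (d - lv) := by
      rw [mul_sub, ← T_add, ← T_add]
      ring_nf
    have expand : (T (d - (lv + 1)) : LaurentPolynomial ℤ) •
          (δ v + (T (-1) - T 1 : LaurentPolynomial ℤ) • δ (v * σ i))
        = (T (d - lv - 1) : LaurentPolynomial ℤ) • δ v
          + ((T (d - lv - 2) - T (d - lv) : LaurentPolynomial ℤ)) • δ (v * σ i) := by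
      rw [smul_add, smul_smul, show d - (lv + 1) = d - lv - 1 by ring, T1]
    rw [expand]
    have e1 : d - (lv + 1) - 1 = d - lv - 2 := by ring
    rw [e1]
    module
  -- express both sides as sums and subtract
  unfold bb
  rw [Finset.sum_mul, Finset.smul_sum]
  rw [← sub_eq_zero, ← Finset.sum_sub_distrib]
  have hterm : ∀ u : WJ,
      (T (d - (ℓ (u:W) : ℤ)) : LaurentPolynomial ℤ) • δ (u:W) * δ (σ i)
        - (T (-1) : LaurentPolynomial ℤ) • ((T (d - (ℓ (u:W) : ℤ)) : LaurentPolynomial ℤ) • δ (u:W))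
      = ((T (d - (ℓ (u:W) : ℤ)) : LaurentPolynomial ℤ) • (δ (u:W) * δ (σ i))
        - (T (d - (ℓ (u:W) : ℤ) - 1) : LaurentPolynomial ℤ) • δ (u:W)) := by
    intro u
    rw [smul_mul_assoc, smul_smul, ← T_add]
    congr 3
    ring
  rw [Finset.sum_congr rfl (fun u _ => hterm u)]
  -- now the involution u ↦ u * si kills the sum
  apply Finset.sum_involution (g := fun u _ => u * si)
  · intro u _
    have hco : ((u * si : WJ) : W) = (u : W) * σ i := rfl
    rcases cs.length_mul_simple (u : W) i with hup | hdn
    · have := helper (u : W) hup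
      rw [hco]
      exact this
    · -- descent: apply helper at v = u * σ i
      have hvup : ℓ ((u : W) * σ i * σ i) = ℓ ((u : W) * σ i) + 1 := by
        rw [cs.simple_mul_simple_cancel_right]
        omega
      have := helper ((u : W) * σ i) hvup
      rw [cs.simple_mul_simple_cancel_right] at this
      rw [hco, add_comm]
      exact this
  · intro u _ _
    intro h
    have : si = 1 := by
      have h' := mul_eq_left.mp h
      exact h'
    have h2 : σ i = 1 := congrArg Subtype.val this
    have h3 := cs.length_simple i
    rw [h2, cs.length_one] at h3
    omega
  · intro u _
    exact Finset.mem_univ _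
  · intro u _
    have : si * si = 1 := Subtype.ext (cs.simple_mul_simple_self i)
    rw [mul_assoc, this, mul_one]

end Hecke

end Stmt8Aux

namespace Stmt8Aux

open CoxeterSystem List LaurentPolynomial
open scoped Classical

variable {B W : Type} [Group W] {M : CoxeterMatrix B} (cs : CoxeterSystem M W)

local prefix:100 "σ" => cs.simple
local prefix:100 "π" => cs.wordProd
local prefix:100 "ℓ" => cs.length

section Hecke2

variable {H : Type} [Ring H] [Algebra (LaurentPolynomial ℤ) H]
  (δ : Module.Basis W (LaurentPolynomial ℤ) H)
  {J : Set B} {WJ : Subgroup W} [Fintype WJ]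

lemma simple_inv_right
    (hquad : ∀ i : B, δ (σ i) * δ (σ i)
      = 1 + ((T (-1) - T 1 : LaurentPolynomial ℤ)) • δ (σ i)) (i : B) :
    δ (σ i) * (δ (σ i) - (T (-1) - T 1 : LaurentPolynomial ℤ) • 1) = 1 := by
  rw [mul_sub, hquad i, mul_smul_comm, mul_one]
  abel

lemma bb_mul_word (hWJ : WJ = Subgroup.closure (cs.simple '' J))
    (hδ1 : δ 1 = 1)
    (hmul : ∀ u w : W, ℓ (u * w) = ℓ u + ℓ w → δ u * δ w = δ (u * w))
    (hquad : ∀ i : B, δ (σ i) * δ (σ i)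
      = 1 + ((T (-1) - T 1 : LaurentPolynomial ℤ)) • δ (σ i))
    (wJ : W) :
    ∀ ω : List B, (∀ b ∈ ω, b ∈ J) →
      (bb cs δ (WJ := WJ) wJ) * δ (π ω)
        = (T (-(ℓ (π ω) : ℤ)) : LaurentPolynomial ℤ) • (bb cs δ (WJ := WJ) wJ) := by
  intro ω
  induction ω using List.reverseRecOn with
  | nil =>
    intro _
    rw [cs.wordProd_nil, hδ1, mul_one, cs.length_one]
    norm_num
  | append_singleton ω i ih =>
    intro hJ
    have hJω : ∀ b ∈ ω, b ∈ J := fun b hb => hJ b (List.mem_append_left _ hb)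
    have hiJ : i ∈ J := hJ i (List.mem_append_right _ (List.mem_singleton_self i))
    have hw' : π (ω ++ [i]) = π ω * σ i := by
      rw [cs.wordProd_append, cs.wordProd_singleton]
    rcases cs.length_mul_simple (π ω) i with hup | hdn
    · have h1 : δ (π ω) * δ (σ i) = δ (π ω * σ i) :=
        hmul _ (σ i) (by rw [cs.length_simple]; exact hup)
      rw [hw', ← h1, ← mul_assoc, ih hJω, smul_mul_assoc,
        bb_mul_simple cs δ hWJ hmul hquad wJ hiJ, smul_smul, ← T_add]
      congr 2
      rw [hup]
      push_cast
      ring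
    · have hww : (π ω * σ i) * σ i = π ω := cs.simple_mul_simple_cancel_right _
      have h1 : δ (π ω * σ i) * δ (σ i) = δ (π ω) := by
        rw [hmul (π ω * σ i) (σ i) (by rw [cs.length_simple, hww]; omega), hww]
      have h2 : δ (π ω) * (δ (σ i) - (T (-1) - T 1 : LaurentPolynomial ℤ) • 1)
          = δ (π ω * σ i) := by
        rw [← h1, mul_assoc, simple_inv_right cs δ hquad, mul_one]
      rw [hw', ← h2, ← mul_assoc, ih hJω, smul_mul_assoc]
      have h3 : (bb cs δ (WJ := WJ) wJ) * (δ (σ i) - (T (-1) - T 1 : LaurentPolynomial ℤ) • 1)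
          = (T 1 : LaurentPolynomial ℤ) • (bb cs δ (WJ := WJ) wJ) := by
        rw [mul_sub, mul_smul_comm, mul_one, bb_mul_simple cs δ hWJ hmul hquad wJ hiJ,
          sub_smul]
        abel
      rw [h3, smul_smul, ← T_add]
      congr 2
      omega
    
lemma bb_mul_u (hWJ : WJ = Subgroup.closure (cs.simple '' J))
    (hδ1 : δ 1 = 1)
    (hmul : ∀ u w : W, ℓ (u * w) = ℓ u + ℓ w → δ u * δ w = δ (u * w))
    (hquad : ∀ i : B, δ (σ i) * δ (σ i)
      = 1 + ((T (-1) - T 1 : LaurentPolynomial ℤ)) • δ (σ i))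
    (wJ : W) {u : W} (hu : u ∈ WJ) :
    (bb cs δ (WJ := WJ) wJ) * δ u
      = (T (-(ℓ u : ℤ)) : LaurentPolynomial ℤ) • (bb cs δ (WJ := WJ) wJ) := by
  obtain ⟨ω, hωJ, rfl⟩ := exists_jword cs hWJ hu
  exact bb_mul_word cs δ hWJ hδ1 hmul hquad wJ ω hωJ

lemma bb_mul_bb (hWJ : WJ = Subgroup.closure (cs.simple '' J))
    (hδ1 : δ 1 = 1)
    (hmul : ∀ u w : W, ℓ (u * w) = ℓ u + ℓ w → δ u * δ w = δ (u * w))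
    (hquad : ∀ i : B, δ (σ i) * δ (σ i)
      = 1 + ((T (-1) - T 1 : LaurentPolynomial ℤ)) • δ (σ i))
    (wJ : W) :
    (bb cs δ (WJ := WJ) wJ) * (bb cs δ (WJ := WJ) wJ)
      = (∑ u : WJ, (T ((ℓ wJ : ℤ) - 2 * (ℓ (u : W) : ℤ)) : LaurentPolynomial ℤ))
          • (bb cs δ (WJ := WJ) wJ) := by
  have hbbdef : (bb cs δ (WJ := WJ) wJ)
      = ∑ u : WJ, (T ((ℓ wJ : ℤ) - (ℓ (u : W) : ℤ)) : LaurentPolynomial ℤ) • δ (u : W) := rfl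
  nth_rewrite 2 [hbbdef]
  rw [Finset.mul_sum, Finset.sum_smul]
  apply Finset.sum_congr rfl
  intro u _
  rw [mul_smul_comm, bb_mul_u cs δ hWJ hδ1 hmul hquad wJ u.2, smul_smul, ← T_add]
  congr 2
  ring

lemma iota_bb
    (ι : H →ₗ[LaurentPolynomial ℤ] H)
    (hι : ∀ x : W, ι (δ x) = δ x⁻¹) (wJ : W) :
    ι (bb cs δ (WJ := WJ) wJ) = bb cs δ (WJ := WJ) wJ := by
  have hbbdef : (bb cs δ (WJ := WJ) wJ)
      = ∑ u : WJ, (T ((ℓ wJ : ℤ) - (ℓ (u : W) : ℤ)) : LaurentPolynomial ℤ) • δ (u : W) := rfl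
  rw [hbbdef, map_sum]
  apply Finset.sum_equiv (Equiv.inv WJ)
  · intro u; simp
  · intro u _
    rw [map_smul, hι]
    have hcoe : (((Equiv.inv ↥WJ) u : WJ) : W) = ((u : W))⁻¹ := rfl
    rw [hcoe, cs.length_inv]

end Hecke2

end Stmt8Aux


open LaurentPolynomial
open scoped Classical

/-- The standard basis {m_x : x ∈ ᴶW} of the spherical module M(J) ≅ b_{w_J}H
is orthonormal for ⟨h₁,h₂⟩_M := (v^{−d_J}/π(J))·ε(i(h₁)h₂). Under the identification
m_x = b_{w_J}δ_x, and clearing the denominator π(J) and the factor v^{−d_J}, this says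
ε(i(b_{w_J}δ_x)·(b_{w_J}δ_y)) = v^{d_J}·π(J) if x = y and 0 otherwise. -/
theorem stmt_8 {B W : Type} [Group W] {M : CoxeterMatrix B} (cs : CoxeterSystem M W)
    (J : Set B) (WJ : Subgroup W) (hWJ : WJ = Subgroup.closure (cs.simple '' J))
    [Fintype WJ]
    (H : Type) [Ring H] [Algebra (LaurentPolynomial ℤ) H]
    (δ : Module.Basis W (LaurentPolynomial ℤ) H) (hδ1 : δ 1 = 1)
    (hmul : ∀ u w : W, cs.length (u * w) = cs.length u + cs.length w →
        δ u * δ w = δ (u * w))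
    (hquad : ∀ i : B, δ (cs.simple i) * δ (cs.simple i)
        = 1 + ((T (-1) - T 1 : LaurentPolynomial ℤ)) • δ (cs.simple i))
    (ι : H →ₗ[LaurentPolynomial ℤ] H)
    (hanti : ∀ a b : H, ι (a * b) = ι b * ι a)
    (hι : ∀ x : W, ι (δ x) = δ x⁻¹)
    (wJ : W) (hwJmem : wJ ∈ WJ) (hwJmax : ∀ u ∈ WJ, cs.length u ≤ cs.length wJ) :
    ∀ x y : W,
      (∀ y' : W, (∃ u ∈ WJ, y' = u * x) → cs.length x ≤ cs.length y') →
      (∀ y' : W, (∃ u ∈ WJ, y' = u * y) → cs.length y ≤ cs.length y') →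
      δ.repr (ι ((∑ u : WJ,
            (T ((cs.length wJ : ℤ) - (cs.length (u : W) : ℤ)) : LaurentPolynomial ℤ) • δ (u : W))
            * δ x)
          * ((∑ u : WJ,
            (T ((cs.length wJ : ℤ) - (cs.length (u : W) : ℤ)) : LaurentPolynomial ℤ) • δ (u : W))
            * δ y)) 1
        = if x = y then
            (T (cs.length wJ : ℤ) : LaurentPolynomial ℤ)
              * (T (-(cs.length wJ : ℤ)) * ∑ u : WJ, (T (2 * (cs.length (u : W) : ℤ)) : LaurentPolynomial ℤ))
          else 0 := by
  intro x y hx hy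
  -- Step 1: length additivity over the cosets of x and y
  have hadd : ∀ z : W, (∀ y' : W, (∃ u ∈ WJ, y' = u * z) → cs.length z ≤ cs.length y') →
      ∀ u ∈ WJ, cs.length (u * z) = cs.length u + cs.length z := by
    intro z hz u hu
    have hmin : ∀ v ∈ WJ, cs.length z⁻¹ ≤ cs.length (z⁻¹ * v) := by
      intro v hv
      have h1 : (z⁻¹ * v)⁻¹ = v⁻¹ * z := by rw [mul_inv_rev, inv_inv]
      have h2 := hz (v⁻¹ * z) ⟨v⁻¹, inv_mem hv, rfl⟩
      calc cs.length z⁻¹ = cs.length z := cs.length_inv z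
        _ ≤ cs.length (v⁻¹ * z) := h2
        _ = cs.length (z⁻¹ * v) := by rw [← h1, cs.length_inv]
    have h3 := Stmt8Aux.min_coset_additive cs hWJ hmin u⁻¹ (inv_mem hu)
    have h4 : (u * z)⁻¹ = z⁻¹ * u⁻¹ := mul_inv_rev u z
    calc cs.length (u * z) = cs.length (z⁻¹ * u⁻¹) := by rw [← h4, cs.length_inv]
      _ = cs.length z⁻¹ + cs.length u⁻¹ := h3
      _ = cs.length u + cs.length z := by rw [cs.length_inv, cs.length_inv]; omega
  have hxadd := hadd x hx
  have hyadd := hadd y hy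
  have huniq : ∀ u : WJ, (u : W) * y = x → x = y := by
    intro u h
    have h1 : cs.length x = cs.length (u : W) + cs.length y := by
      rw [← h]; exact hyadd (u : W) u.2
    have h2 : ((u : W))⁻¹ * x = y := by rw [← h, inv_mul_cancel_left]
    have h3 : cs.length y = cs.length ((u : W))⁻¹ + cs.length x := by
      rw [← h2]; exact hxadd _ (inv_mem u.2)
    rw [cs.length_inv] at h3
    have h5 : cs.length (u : W) = 0 := by omega
    have h6 : (u : W) = 1 := cs.length_eq_zero_iff.mp h5
    rw [← h, h6, one_mul]
  -- Step 2: Hecke-algebra computation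
  have hbbdef : (∑ u : WJ,
        (T ((cs.length wJ : ℤ) - (cs.length (u : W) : ℤ)) : LaurentPolynomial ℤ) • δ (u : W))
      = Stmt8Aux.bb cs δ (WJ := WJ) wJ := rfl
  rw [hbbdef, hanti, hι, Stmt8Aux.iota_bb cs δ ι hι wJ]
  rw [mul_assoc,
    ← mul_assoc (Stmt8Aux.bb cs δ (WJ := WJ) wJ) (Stmt8Aux.bb cs δ (WJ := WJ) wJ) (δ y),
    Stmt8Aux.bb_mul_bb cs δ hWJ hδ1 hmul hquad wJ, smul_mul_assoc, mul_smul_comm, map_smul,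
    Finsupp.smul_apply, smul_eq_mul]
  have hbby : (Stmt8Aux.bb cs δ (WJ := WJ) wJ) * δ y
      = ∑ u : WJ, (T ((cs.length wJ : ℤ) - (cs.length (u:W) : ℤ)) : LaurentPolynomial ℤ)
          • δ ((u : W) * y) := by
    rw [← hbbdef, Finset.sum_mul]
    apply Finset.sum_congr rfl
    intro u _
    rw [smul_mul_assoc, hmul _ _ (hyadd (u : W) u.2)]
  rw [hbby, Finset.mul_sum, map_sum, Finsupp.finset_sum_apply]
  have hterm : ∀ u : WJ,
      (δ.repr (δ x⁻¹ * ((T ((cs.length wJ : ℤ) - (cs.length (u:W) : ℤ)) : LaurentPolynomial ℤ)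
          • δ ((u:W) * y)))) 1
      = (T ((cs.length wJ : ℤ) - (cs.length (u:W) : ℤ)) : LaurentPolynomial ℤ)
          * (if (u:W) * y = x then 1 else 0) := by
    intro u
    rw [mul_smul_comm, map_smul, Finsupp.smul_apply, smul_eq_mul,
      Stmt8Aux.pairing cs δ hδ1 hmul hquad ((u:W) * y) x⁻¹, inv_inv]
  rw [Finset.sum_congr rfl (fun u _ => hterm u)]
  by_cases hxy : x = y
  · subst hxy
    rw [if_pos rfl]
    have hsum : (∑ u : WJ,
        (T ((cs.length wJ : ℤ) - (cs.length (u:W) : ℤ)) : LaurentPolynomial ℤ)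
          * (if (u:W) * x = x then 1 else 0)) = T (cs.length wJ : ℤ) := by
      rw [Finset.sum_eq_single_of_mem (1 : WJ) (Finset.mem_univ _) ?h0]
      · rw [OneMemClass.coe_one, one_mul, if_pos rfl, cs.length_one, mul_one]
        norm_num
      case h0 =>
        intro u _ hu
        have hne : ¬ ((u:W) * x = x) := by
          intro h
          exact hu (Subtype.ext (mul_eq_right.mp h))
        rw [if_neg hne, mul_zero]
    rw [hsum, Finset.sum_mul, ← mul_assoc, ← T_add, add_neg_cancel, T_zero, one_mul]
    apply Finset.sum_equiv (Equiv.mulLeft (⟨wJ, hwJmem⟩ : WJ))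
    · intro u; simp
    · intro u _
      rw [← T_add]
      congr 1
      have hp := Stmt8Aux.pal cs hWJ hwJmem hwJmax (u : W) u.2
      have hcoe : ((Equiv.mulLeft (⟨wJ, hwJmem⟩ : WJ) u : WJ) : W) = wJ * (u : W) := rfl
      rw [hcoe]
      omega
  · rw [if_neg hxy]
    have hzero : ∀ u : WJ, u ∈ Finset.univ →
        (T ((cs.length wJ : ℤ) - (cs.length (u:W) : ℤ)) : LaurentPolynomial ℤ)
          * (if (u:W) * y = x then 1 else 0) = 0 := by
      intro u _
      have hne : ¬ ((u:W) * y = x) := fun h => hxy (huniq u h)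
      rw [if_neg hne, mul_zero]
    rw [Finset.sum_eq_zero hzero, mul_zero]
end

section
/- In the spherical module M(J) with the orthonormal bilinear form ⟨·,·⟩_M on the standard basis, for any two expressions x̲, y̲ one has ⟨1⊗b_{x̲}, 1⊗b_{y̲}⟩_M = Σ v^{sdef(e̲)+sdef(f̲)}, where the sum runs over all pairs of subexpressions e̲ ⊆ x̲, f̲ ⊆ y̲ with W_J·x̲^{e̲} = W_J·y̲^{f̲}. -/
open LaurentPolynomial MulOpposite
open scoped Classical

/-- The spherical defect of a subexpression, computed along the coset stroll
(`mcr` sends an element to the minimal-length representative of its coset `W_J·w`). -/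
noncomputable def sdefAux {B W : Type} [Group W] {M : CoxeterMatrix B}
    (cs : CoxeterSystem M W) (mcr : W → W) : W → List (B × Bool) → ℤ
  | _, [] => 0
  | z, p :: l =>
      (if mcr (z * cs.simple p.1) ≠ z * cs.simple p.1 then (if p.2 then -1 else 1)
       else if cs.length z < cs.length (z * cs.simple p.1) then (if p.2 then 0 else 1)
       else (if p.2 then 0 else -1))
      + sdefAux cs mcr (if p.2 then mcr (z * cs.simple p.1) else z) l

/-- The letters of an expression selected by a subexpression. -/
def subletters {B : Type} (l : List (B × Bool)) : List B :=
  l.filterMap fun p => if p.2 then some p.1 else none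

namespace SphericalAux

open List CoxeterSystem

private theorem abstract_key {G : Type} [Group G] (f g : Equiv.Perm (G × ℤˣ)) (a b p : G)
    (hf : ∀ x : G × ℤˣ, f x = (a * x.1 * a, if x.1 = a then -x.2 else x.2))
    (hg : ∀ x : G × ℤˣ, g x = (b * x.1 * b, if x.1 = b then -x.2 else x.2))
    (ha : a * a = 1) (hb : b * b = 1) (hp : p = a * b) :
    ∀ (n : ℕ) (t : G) (e : ℤˣ),
      ((f * g) ^ n) (t, e)
        = (p ^ n * t * p⁻¹ ^ n,
           (((List.range (2 * n)).map fun k =>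
              if t = p⁻¹ ^ k * b then (-1 : ℤˣ) else 1).prod) * e) := by
  have hpinv : p⁻¹ = b * a := by
    rw [hp, mul_inv_rev, inv_eq_of_mul_eq_one_right ha, inv_eq_of_mul_eq_one_right hb]
  have hbp1 : b * p = p⁻¹ * b := by rw [hpinv, hp, mul_assoc]
  have hbp : ∀ n : ℕ, b * p ^ n = p⁻¹ ^ n * b := by
    intro n
    induction n with
    | zero => simp
    | succ n ih =>
      rw [pow_succ', ← mul_assoc, hbp1, mul_assoc, ih, ← mul_assoc, ← pow_succ']
  intro n
  induction n with
  | zero => intro t e; simp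
  | succ n ih =>
    intro t e
    have conj_iff : ∀ c t' : G, (p ^ n * t' * p⁻¹ ^ n = c) ↔ t' = p⁻¹ ^ n * c * p ^ n := by
      intro c t'
      constructor
      · intro h; rw [← h]; group
      · intro h; rw [h]; group
    have hb1 : p⁻¹ ^ n * b * p ^ n = p⁻¹ ^ (2 * n) * b := by
      rw [mul_assoc, hbp n, ← mul_assoc, ← pow_add, ← two_mul]
    have c1 : (p ^ n * t * p⁻¹ ^ n = b) ↔ t = p⁻¹ ^ (2 * n) * b := by
      rw [conj_iff, hb1]
    have hbconj : ∀ X : G, (b * X * b = a) ↔ X = b * a * b := by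
      intro X
      constructor
      · intro h
        calc X = (b * b) * X * (b * b) := by rw [hb]; simp
        _ = b * (b * X * b) * b := by group
        _ = b * a * b := by rw [h]
      · intro h
        rw [h]
        calc b * (b * a * b) * b = (b * b) * a * (b * b) := by group
        _ = a := by rw [hb]; simp
    have hb2 : p⁻¹ ^ n * (b * a * b) * p ^ n = p⁻¹ ^ (2 * n + 1) * b := by
      have h1 : b * a * b = p⁻¹ * b := by rw [hpinv, mul_assoc]
      calc p⁻¹ ^ n * (b * a * b) * p ^ n = (p⁻¹ ^ n * p⁻¹) * (b * p ^ n) := by rw [h1]; group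
      _ = p⁻¹ ^ (n + 1) * (p⁻¹ ^ n * b) := by rw [← pow_succ, hbp n]
      _ = p⁻¹ ^ (n + 1 + n) * b := by rw [pow_add]; group
      _ = p⁻¹ ^ (2 * n + 1) * b := by rw [show n + 1 + n = 2 * n + 1 by ring]
    have c2 : (b * (p ^ n * t * p⁻¹ ^ n) * b = a) ↔ t = p⁻¹ ^ (2 * n + 1) * b := by
      rw [hbconj, conj_iff, hb2]
    have hfst : a * (b * (p ^ n * t * p⁻¹ ^ n) * b) * a = p ^ (n + 1) * t * p⁻¹ ^ (n + 1) := by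
      have h1 : a * (b * (p ^ n * t * p⁻¹ ^ n) * b) * a
          = (a * b) * (p ^ n * t * p⁻¹ ^ n) * (b * a) := by group
      rw [h1, ← hp, ← hpinv, pow_succ', pow_succ]
      group
    rw [pow_succ', Equiv.Perm.mul_apply, ih t e, Equiv.Perm.mul_apply, hg, hf]
    simp only
    refine Prod.ext hfst ?_
    simp only [c1, c2]
    have hrange : List.range (2 * (n + 1)) = (List.range (2 * n) ++ [2 * n]) ++ [2 * n + 1] := by
      rw [show 2 * (n + 1) = (2 * n + 1) + 1 by ring, List.range_succ, List.range_succ]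
    rw [hrange]
    simp only [List.map_append, List.prod_append, List.map_cons, List.map_nil,
      List.prod_cons, List.prod_nil, mul_one]
    split_ifs with hA hB <;> simp [mul_comm, mul_left_comm, mul_assoc]

private theorem abstract_pow_eq_one {G : Type} [Group G] (f g : Equiv.Perm (G × ℤˣ)) (a b p : G)
    (hf : ∀ x : G × ℤˣ, f x = (a * x.1 * a, if x.1 = a then -x.2 else x.2))
    (hg : ∀ x : G × ℤˣ, g x = (b * x.1 * b, if x.1 = b then -x.2 else x.2))
    (ha : a * a = 1) (hb : b * b = 1) (hp : p = a * b) (m : ℕ) (hm : p ^ m = 1) :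
    (f * g) ^ m = 1 := by
  apply Equiv.ext
  rintro ⟨t, e⟩
  rw [abstract_key f g a b p hf hg ha hb hp m t e]
  have h1 : p⁻¹ ^ m = 1 := by rw [inv_pow, hm, inv_one]
  have hprod : (((List.range (2 * m)).map fun k =>
      if t = p⁻¹ ^ k * b then (-1 : ℤˣ) else 1).prod) = 1 := by
    rw [two_mul, List.range_add, List.map_append, List.prod_append, List.map_map]
    have hcomp : ((fun k => if t = p⁻¹ ^ k * b then (-1 : ℤˣ) else 1) ∘ fun x => m + x)
        = fun k => if t = p⁻¹ ^ k * b then (-1 : ℤˣ) else 1 := by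
      funext k
      simp only [Function.comp_apply, pow_add, h1, one_mul]
    rw [hcomp]
    exact Int.units_mul_self _
  rw [hm, h1, hprod]
  simp

variable {B W : Type} [Group W] {M : CoxeterMatrix B} (cs : CoxeterSystem M W)

/-- The reflection-sign permutation attached to a simple generator. -/
noncomputable def sgm (i : B) : Equiv.Perm (W × ℤˣ) where
  toFun x := (cs.simple i * x.1 * cs.simple i, if x.1 = cs.simple i then -x.2 else x.2)
  invFun x := (cs.simple i * x.1 * cs.simple i, if x.1 = cs.simple i then -x.2 else x.2)
  left_inv := by
    rintro ⟨t, e⟩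
    have h2 : (cs.simple i * t * cs.simple i = cs.simple i) ↔ t = cs.simple i := by
      rw [mul_assoc, mul_eq_left, mul_eq_one_iff_eq_inv, cs.inv_simple]
    by_cases h : t = cs.simple i
    · simp [h, mul_assoc]
    · simp only [h2, h, if_neg]
      refine Prod.ext ?_ rfl
      simp [mul_assoc]
  right_inv := by
    rintro ⟨t, e⟩
    have h2 : (cs.simple i * t * cs.simple i = cs.simple i) ↔ t = cs.simple i := by
      rw [mul_assoc, mul_eq_left, mul_eq_one_iff_eq_inv, cs.inv_simple]
    by_cases h : t = cs.simple i
    · simp [h, mul_assoc]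
    · simp only [h2, h, if_neg]
      refine Prod.ext ?_ rfl
      simp [mul_assoc]

theorem sgm_apply (i : B) (x : W × ℤˣ) :
    sgm cs i x = (cs.simple i * x.1 * cs.simple i, if x.1 = cs.simple i then -x.2 else x.2) := rfl

theorem sgm_liftable : M.IsLiftable (fun i => sgm cs i) := by
  intro i i'
  exact abstract_pow_eq_one (sgm cs i) (sgm cs i') (cs.simple i) (cs.simple i')
    (cs.simple i * cs.simple i') (sgm_apply cs i) (sgm_apply cs i')
    (cs.simple_mul_simple_self i) (cs.simple_mul_simple_self i') rfl (M i i')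
    (cs.simple_mul_simple_pow i i')

/-- The sign representation of `W` on `W × ℤˣ`. -/
noncomputable def phiP : W →* Equiv.Perm (W × ℤˣ) :=
  cs.lift ⟨fun i => sgm cs i, sgm_liftable cs⟩

theorem phiP_simple (i : B) : phiP cs (cs.simple i) = sgm cs i :=
  cs.lift_apply_simple (sgm_liftable cs) i

theorem phiP_wordProd (ω : List B) (t : W) (e : ℤˣ) :
    phiP cs (cs.wordProd ω) (t, e)
      = (cs.wordProd ω * t * (cs.wordProd ω)⁻¹,
         (-1 : ℤˣ) ^ ((cs.rightInvSeq ω).count t) * e) := by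
  induction ω with
  | nil => simp [CoxeterSystem.rightInvSeq]
  | cons i ω ih =>
    rw [wordProd_cons, map_mul, Equiv.Perm.mul_apply, ih, phiP_simple, sgm_apply]
    simp only
    have hris : cs.rightInvSeq (i :: ω)
        = ((cs.wordProd ω)⁻¹ * cs.simple i * cs.wordProd ω) :: cs.rightInvSeq ω := rfl
    have hfst : cs.simple i * (cs.wordProd ω * t * (cs.wordProd ω)⁻¹) * cs.simple i
        = cs.wordProd (i :: ω) * t * (cs.wordProd (i :: ω))⁻¹ := by
      rw [wordProd_cons, mul_inv_rev, cs.inv_simple]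
      group
    refine Prod.ext hfst ?_
    have hcond : (cs.wordProd ω * t * (cs.wordProd ω)⁻¹ = cs.simple i)
        ↔ ((cs.wordProd ω)⁻¹ * cs.simple i * cs.wordProd ω = t) := by
      constructor
      · intro h; rw [← h]; group
      · intro h; rw [← h]; group
    rw [hris, List.count_cons]
    by_cases h : (cs.wordProd ω)⁻¹ * cs.simple i * cs.wordProd ω = t
    · rw [if_pos (hcond.mpr h), if_pos (by simpa using h), pow_succ]
      simp [mul_neg, neg_mul, mul_assoc]
    · rw [if_neg (fun hc => h (hcond.mp hc)), if_neg (by simpa using h), add_zero]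

theorem ris_count_parity {ω ω' : List B} (h : cs.wordProd ω = cs.wordProd ω') (t : W) :
    ((-1 : ℤˣ)) ^ ((cs.rightInvSeq ω).count t) = (-1 : ℤˣ) ^ ((cs.rightInvSeq ω').count t) := by
  have h1 := phiP_wordProd cs ω t 1
  have h2 := phiP_wordProd cs ω' t 1
  rw [h, h2] at h1
  have := congrArg Prod.snd h1
  simpa using this.symm

theorem lis_count_parity {ω ω' : List B} (h : cs.wordProd ω = cs.wordProd ω') (t : W) :
    ((-1 : ℤˣ)) ^ ((cs.leftInvSeq ω).count t) = (-1 : ℤˣ) ^ ((cs.leftInvSeq ω').count t) := by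
  have e1 : (cs.leftInvSeq ω).count t = (cs.rightInvSeq ω.reverse).count t := by
    rw [cs.rightInvSeq_reverse, List.count_reverse]
  have e2 : (cs.leftInvSeq ω').count t = (cs.rightInvSeq ω'.reverse).count t := by
    rw [cs.rightInvSeq_reverse, List.count_reverse]
  rw [e1, e2]
  apply ris_count_parity
  rw [wordProd_reverse, wordProd_reverse, h]


theorem mem_lis_of_descent {ω : List B} (hred : cs.IsReduced ω) {j : B}
    (h : cs.length (cs.simple j * cs.wordProd ω) < cs.length (cs.wordProd ω)) :
    cs.simple j ∈ cs.leftInvSeq ω := by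
  obtain ⟨α, hlen, hα⟩ := cs.exists_reduced_word (cs.simple j * cs.wordProd ω)
  have hlen : α.length = cs.length (cs.simple j * cs.wordProd ω) := by rw [hα]; exact hlen.symm
  have hπ : cs.wordProd (j :: α) = cs.wordProd ω := by
    rw [wordProd_cons, ← hα, ← mul_assoc, cs.simple_mul_simple_self, one_mul]
  have hlsm := cs.length_simple_mul (cs.wordProd ω) j
  have hred' : cs.IsReduced (j :: α) := by
    unfold CoxeterSystem.IsReduced
    rw [hπ]
    simp only [List.length_cons, hlen]
    unfold CoxeterSystem.IsReduced at hred
    omega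
  have hmem : cs.simple j ∈ cs.leftInvSeq (j :: α) := by
    rw [CoxeterSystem.leftInvSeq]
    exact List.mem_cons_self
  have hcount1 : (cs.leftInvSeq (j :: α)).count (cs.simple j) = 1 := by
    have hle := List.nodup_iff_count_le_one.mp (hred'.nodup_leftInvSeq) (cs.simple j)
    have hge := List.count_pos_iff.mpr hmem
    omega
  have hpar := lis_count_parity cs hπ (cs.simple j)
  rw [hcount1, pow_one] at hpar
  have hodd : (cs.leftInvSeq ω).count (cs.simple j) ≠ 0 := by
    intro h0
    rw [h0, pow_zero] at hpar
    exact (by decide : ¬((-1 : ℤˣ) = 1)) hpar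
  exact List.count_pos_iff.mp (Nat.pos_of_ne_zero hodd)

theorem exchange_left {ω : List B} (hred : cs.IsReduced ω) {j : B}
    (h : cs.length (cs.simple j * cs.wordProd ω) < cs.length (cs.wordProd ω)) :
    ∃ k < ω.length, cs.simple j * cs.wordProd ω = cs.wordProd (ω.eraseIdx k) := by
  obtain ⟨k, hk, hEq⟩ := List.mem_iff_getElem.mp (mem_lis_of_descent cs hred h)
  rw [cs.length_leftInvSeq] at hk
  refine ⟨k, hk, ?_⟩
  rw [← cs.getD_leftInvSeq_mul_wordProd ω k, List.getD_eq_getElem _ _ (by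
    rw [cs.length_leftInvSeq]; exact hk), hEq]

theorem exchange_right_weak {ω : List B} (hred : cs.IsReduced ω) {i : B}
    (h : cs.length (cs.wordProd ω * cs.simple i) < cs.length (cs.wordProd ω)) :
    ∃ α : List B, cs.wordProd α = cs.wordProd ω * cs.simple i ∧
      α.length + 1 = ω.length ∧ ∀ b ∈ α, b ∈ ω := by
  have hred' : cs.IsReduced ω.reverse := (cs.isReduced_reverse_iff ω).mpr hred
  have h' : cs.length (cs.simple i * cs.wordProd ω.reverse)
      < cs.length (cs.wordProd ω.reverse) := by
    rw [wordProd_reverse]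
    have : cs.simple i * (cs.wordProd ω)⁻¹ = (cs.wordProd ω * cs.simple i)⁻¹ := by
      rw [mul_inv_rev, cs.inv_simple]
    rw [this, cs.length_inv, cs.length_inv]
    exact h
  obtain ⟨k, hk, hEq⟩ := exchange_left cs hred' h'
  refine ⟨(ω.reverse.eraseIdx k).reverse, ?_, ?_, ?_⟩
  · rw [wordProd_reverse, ← hEq, wordProd_reverse, mul_inv_rev, cs.inv_simple, inv_inv]
  · have h2 := List.length_eraseIdx_add_one hk
    rw [List.length_reverse]
    simp only [List.length_reverse] at h2
    omega
  · intro b hb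
    rw [List.mem_reverse] at hb
    have := (List.eraseIdx_sublist ω.reverse k).subset hb
    rwa [List.mem_reverse] at this

theorem delete_two {ω : List B} (h : ¬ cs.IsReduced ω) :
    ∃ ω', cs.wordProd ω' = cs.wordProd ω ∧ ω'.length + 2 = ω.length ∧ ∀ b ∈ ω', b ∈ ω := by
  have hfull : ¬ cs.IsReduced (ω.take ω.length) := by rwa [List.take_length]
  have hex : ∃ n, ¬ cs.IsReduced (ω.take n) := ⟨ω.length, hfull⟩
  classical
  let n := Nat.find hex
  have hn : ¬ cs.IsReduced (ω.take n) := Nat.find_spec hex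
  have hn0 : n ≠ 0 := by
    intro h0
    apply hn
    rw [h0, List.take_zero]
    unfold CoxeterSystem.IsReduced
    simp
  obtain ⟨k, hk1⟩ : ∃ k, n = k + 1 := ⟨n - 1, by omega⟩
  rw [hk1] at hn
  have hk : cs.IsReduced (ω.take k) := by
    by_contra hc
    exact absurd (Nat.find_min hex (show k < n by omega)) (by exact fun a => a hc)
  have hklen : k < ω.length := by
    by_contra hc
    push_neg at hc
    apply hn
    rw [List.take_of_length_le (by omega)]
    rw [List.take_of_length_le hc] at hk
    exact hk
  have htake : ω.take (k + 1) = ω.take k ++ [ω[k]] := by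
    rw [List.take_succ, List.getElem?_eq_getElem hklen]
    rfl
  have hprodtake : cs.wordProd (ω.take (k + 1)) = cs.wordProd (ω.take k) * cs.simple ω[k] := by
    rw [htake, wordProd_append, wordProd_singleton]
  have hlentake : (ω.take (k + 1)).length = k + 1 := by
    rw [List.length_take]
    omega
  have hlen' : cs.length (cs.wordProd (ω.take k)) = k := by
    have := hk
    unfold CoxeterSystem.IsReduced at this
    rw [this, List.length_take]
    omega
  have hdown : cs.length (cs.wordProd (ω.take k) * cs.simple ω[k])
      < cs.length (cs.wordProd (ω.take k)) := by
    have hne : cs.length (cs.wordProd (ω.take (k + 1))) ≠ k + 1 := by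
      intro hc
      apply hn
      unfold CoxeterSystem.IsReduced
      rw [hc, hlentake]
    rw [hprodtake] at hne
    have := cs.length_mul_simple (cs.wordProd (ω.take k)) ω[k]
    omega
  obtain ⟨α, hαprod, hαlen, hαmem⟩ := exchange_right_weak cs hk hdown
  refine ⟨α ++ ω.drop (k + 1), ?_, ?_, ?_⟩
  · rw [wordProd_append, hαprod, ← hprodtake, ← wordProd_append, List.take_append_drop]
  · have hαlen' : α.length + 1 = k := by
      rwa [List.length_take, min_eq_left (le_of_lt hklen)] at hαlen
    rw [List.length_append, List.length_drop]
    omega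
  · intro b hb
    rcases List.mem_append.mp hb with hb | hb
    · exact (List.take_sublist k ω).subset (hαmem b hb)
    · exact (List.drop_sublist (k + 1) ω).subset hb

theorem to_reduced (ω : List B) :
    ∃ ω', cs.IsReduced ω' ∧ cs.wordProd ω' = cs.wordProd ω ∧ ∀ b ∈ ω', b ∈ ω := by
  suffices H : ∀ (n : ℕ) (ω : List B), ω.length = n →
      ∃ ω', cs.IsReduced ω' ∧ cs.wordProd ω' = cs.wordProd ω ∧ ∀ b ∈ ω', b ∈ ω by
    exact H ω.length ω rfl
  intro n
  induction n using Nat.strong_induction_on with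
  | _ n ih =>
    intro ω hω
    by_cases h : cs.IsReduced ω
    · exact ⟨ω, h, rfl, fun b hb => hb⟩
    · obtain ⟨ω₁, hprod, hlen, hmem⟩ := delete_two cs h
      obtain ⟨ω', hred', hprod', hmem'⟩ := ih ω₁.length (by omega) ω₁ rfl
      exact ⟨ω', hred', by rw [hprod', hprod], fun b hb => hmem b (hmem' b hb)⟩


variable {J : Set B} {WJ : Subgroup W}

theorem simple_mem_WJ (hWJ : WJ = Subgroup.closure (cs.simple '' J)) {j : B} (hj : j ∈ J) :
    cs.simple j ∈ WJ := by
  rw [hWJ]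
  exact Subgroup.subset_closure ⟨j, hj, rfl⟩

theorem wordProd_mem_WJ (hWJ : WJ = Subgroup.closure (cs.simple '' J)) {ω : List B}
    (hω : ∀ b ∈ ω, b ∈ J) : cs.wordProd ω ∈ WJ := by
  induction ω with
  | nil => rw [wordProd_nil]; exact one_mem _
  | cons j ω ih =>
    rw [wordProd_cons]
    exact mul_mem (simple_mem_WJ cs hWJ (hω j (List.mem_cons_self)))
      (ih fun b hb => hω b (List.mem_cons_of_mem _ hb))

theorem exists_reduced_Jword (hWJ : WJ = Subgroup.closure (cs.simple '' J)) {u : W} (hu : u ∈ WJ) :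
    ∃ ω, cs.IsReduced ω ∧ (∀ b ∈ ω, b ∈ J) ∧ cs.wordProd ω = u := by
  rw [hWJ] at hu
  induction hu using Subgroup.closure_induction with
  | mem x hx =>
    obtain ⟨j, hj, rfl⟩ := hx
    exact ⟨[j], by unfold CoxeterSystem.IsReduced; simp,
      by simp [hj], by simp⟩
  | one => exact ⟨[], by unfold CoxeterSystem.IsReduced; simp, by simp, by simp⟩
  | mul x y hx hy ihx ihy =>
    obtain ⟨ωx, _, hxJ, hxprod⟩ := ihx
    obtain ⟨ωy, _, hyJ, hyprod⟩ := ihy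
    obtain ⟨ω', hred', hprod', hmem'⟩ := to_reduced cs (ωx ++ ωy)
    refine ⟨ω', hred', fun b hb => ?_, by rw [hprod', wordProd_append, hxprod, hyprod]⟩
    rcases List.mem_append.mp (hmem' b hb) with hb' | hb'
    · exact hxJ b hb'
    · exact hyJ b hb'
  | inv x hx ihx =>
    obtain ⟨ω, hred, hJ, hprod⟩ := ihx
    refine ⟨ω.reverse, (cs.isReduced_reverse_iff ω).mpr hred, fun b hb => hJ b (List.mem_reverse.mp hb),
      by rw [wordProd_reverse, hprod]⟩

/-- `z` is the minimal-length element in its coset `W_J z`. -/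
def MinP (cs : CoxeterSystem M W) (WJ : Subgroup W) (z : W) : Prop :=
  ∀ u ∈ WJ, cs.length z ≤ cs.length (u * z)

theorem length_Jword_mul (hWJ : WJ = Subgroup.closure (cs.simple '' J)) {z : W} (hz : MinP cs WJ z) :
    ∀ ω : List B, cs.IsReduced ω → (∀ b ∈ ω, b ∈ J) →
      cs.length (cs.wordProd ω * z) = ω.length + cs.length z := by
  intro ω
  induction ω with
  | nil => simp
  | cons j ω ih =>
    intro hred hmem
    have hsm := cs.length_simple_mul (cs.wordProd ω) j
    have hlenred : cs.length (cs.wordProd (j :: ω)) = ω.length + 1 := by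
      have := hred
      unfold CoxeterSystem.IsReduced at this
      rw [this]
      simp
    rw [wordProd_cons] at hlenred
    have hwle := cs.length_wordProd_le ω
    have hredtail : cs.IsReduced ω := by
      unfold CoxeterSystem.IsReduced
      omega
    have hih := ih hredtail fun b hb => hmem b (List.mem_cons_of_mem _ hb)
    have hsm2 := cs.length_simple_mul (cs.wordProd ω * z) j
    rw [wordProd_cons, mul_assoc]
    by_contra hne
    simp only [List.length_cons] at hne
    have hdown : cs.length (cs.simple j * (cs.wordProd ω * z))
        < cs.length (cs.wordProd ω * z) := by omega
    obtain ⟨ζ, hζlen, hζprod⟩ := cs.exists_reduced_word z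
    have hζlen : ζ.length = cs.length z := by rw [hζprod]; exact hζlen.symm
    have hcat_prod : cs.wordProd (ω ++ ζ) = cs.wordProd ω * z := by
      rw [wordProd_append, ← hζprod]
    have hcatred : cs.IsReduced (ω ++ ζ) := by
      unfold CoxeterSystem.IsReduced
      rw [hcat_prod, List.length_append, hζlen, hih]
    have hdown' : cs.length (cs.simple j * cs.wordProd (ω ++ ζ))
        < cs.length (cs.wordProd (ω ++ ζ)) := by
      rw [hcat_prod]; exact hdown
    obtain ⟨k, hk, hEq⟩ := exchange_left cs hcatred hdown'
    rw [hcat_prod] at hEq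
    by_cases hkω : k < ω.length
    · rw [List.eraseIdx_append_of_lt_length hkω, wordProd_append, ← hζprod] at hEq
      have hEq2 : cs.simple j * cs.wordProd ω = cs.wordProd (ω.eraseIdx k) :=
        mul_right_cancel (by rw [mul_assoc]; exact hEq)
      have hle := cs.length_wordProd_le (ω.eraseIdx k)
      have hlen2 := List.length_eraseIdx_add_one hkω
      rw [← hEq2] at hle
      omega
    · push_neg at hkω
      rw [List.eraseIdx_append_of_length_le hkω, wordProd_append] at hEq
      have hEq3 : cs.wordProd (ζ.eraseIdx (k - ω.length))
          = (cs.wordProd ω)⁻¹ * cs.simple j * cs.wordProd ω * z := by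
        rw [show (cs.wordProd ω)⁻¹ * cs.simple j * cs.wordProd ω * z
            = (cs.wordProd ω)⁻¹ * (cs.simple j * (cs.wordProd ω * z)) by group, hEq]
        group
      have humem : (cs.wordProd ω)⁻¹ * cs.simple j * cs.wordProd ω ∈ WJ := by
        refine mul_mem (mul_mem (inv_mem ?_) ?_) ?_
        · exact wordProd_mem_WJ cs hWJ fun b hb => hmem b (List.mem_cons_of_mem _ hb)
        · exact simple_mem_WJ cs hWJ (hmem j (List.mem_cons_self))
        · exact wordProd_mem_WJ cs hWJ fun b hb => hmem b (List.mem_cons_of_mem _ hb)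
      have hminz := hz _ humem
      rw [← hEq3] at hminz
      have hle2 := cs.length_wordProd_le (ζ.eraseIdx (k - ω.length))
      have hkζ : k - ω.length < ζ.length := by
        rw [List.length_append] at hk
        omega
      have hlen3 := List.length_eraseIdx_add_one hkζ
      omega

theorem length_mul_of_min (hWJ : WJ = Subgroup.closure (cs.simple '' J)) {z u : W} (hz : MinP cs WJ z) (hu : u ∈ WJ) :
    cs.length (u * z) = cs.length u + cs.length z := by
  obtain ⟨ω, hred, hJ, hprod⟩ := exists_reduced_Jword cs hWJ hu
  have := length_Jword_mul cs hWJ hz ω hred hJ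
  rw [hprod] at this
  unfold CoxeterSystem.IsReduced at hred
  rw [hprod] at hred
  omega

theorem min_unique (hWJ : WJ = Subgroup.closure (cs.simple '' J)) {z u : W} (hz : MinP cs WJ z) (hu : u ∈ WJ)
    (h : cs.length (u * z) ≤ cs.length z) : u = 1 := by
  have := length_mul_of_min cs hWJ hz hu
  have hu0 : cs.length u = 0 := by omega
  exact (cs.length_eq_zero_iff).mp hu0


section Mcr

variable {mcr : W → W}

theorem minP_mcr (hmcr1 : ∀ w : W, ∃ u ∈ WJ, mcr w = u * w)
    (hmcr2 : ∀ w y : W, (∃ u ∈ WJ, y = u * w) → cs.length (mcr w) ≤ cs.length y)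
    (w : W) : MinP cs WJ (mcr w) := by
  intro u hu
  obtain ⟨u0, hu0, he⟩ := hmcr1 w
  exact hmcr2 w (u * mcr w) ⟨u * u0, mul_mem hu hu0, by rw [he, mul_assoc]⟩

theorem mcr_eq_self_iff (hWJ : WJ = Subgroup.closure (cs.simple '' J))
    (hmcr1 : ∀ w : W, ∃ u ∈ WJ, mcr w = u * w)
    (hmcr2 : ∀ w y : W, (∃ u ∈ WJ, y = u * w) → cs.length (mcr w) ≤ cs.length y)
    (z : W) : mcr z = z ↔ MinP cs WJ z := by
  constructor
  · intro h
    rw [← h]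
    exact minP_mcr cs hmcr1 hmcr2 z
  · intro hmin
    obtain ⟨u, hu, he⟩ := hmcr1 z
    have hle := hmcr2 z z ⟨1, one_mem _, (one_mul z).symm⟩
    rw [he] at hle
    have hu1 : u = 1 := min_unique cs hWJ hmin hu hle
    rw [he, hu1, one_mul]

theorem mcr_coset (hWJ : WJ = Subgroup.closure (cs.simple '' J))
    (hmcr1 : ∀ w : W, ∃ u ∈ WJ, mcr w = u * w)
    (hmcr2 : ∀ w y : W, (∃ u ∈ WJ, y = u * w) → cs.length (mcr w) ≤ cs.length y)
    {v : W} (hv : v ∈ WJ) (w : W) : mcr (v * w) = mcr w := by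
  obtain ⟨u1, hu1, he1⟩ := hmcr1 (v * w)
  obtain ⟨u2, hu2, he2⟩ := hmcr1 w
  have hmin2 : MinP cs WJ (mcr w) := minP_mcr cs hmcr1 hmcr2 w
  have hmem : u1 * v * u2⁻¹ ∈ WJ := mul_mem (mul_mem hu1 hv) (inv_mem hu2)
  have heq : mcr (v * w) = (u1 * v * u2⁻¹) * mcr w := by
    rw [he2, he1]
    group
  have hle : cs.length (mcr (v * w)) ≤ cs.length (mcr w) :=
    hmcr2 (v * w) (mcr w) ⟨u2 * v⁻¹, mul_mem hu2 (inv_mem hv), by rw [he2]; group⟩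
  have hmul := length_mul_of_min cs hWJ hmin2 hmem
  rw [← heq] at hmul
  have h0 : cs.length (u1 * v * u2⁻¹) = 0 := by omega
  rw [heq, (cs.length_eq_zero_iff).mp h0, one_mul]

theorem mcr_idem (hWJ : WJ = Subgroup.closure (cs.simple '' J))
    (hmcr1 : ∀ w : W, ∃ u ∈ WJ, mcr w = u * w)
    (hmcr2 : ∀ w y : W, (∃ u ∈ WJ, y = u * w) → cs.length (mcr w) ≤ cs.length y)
    (w : W) : mcr (mcr w) = mcr w := by
  obtain ⟨u, hu, he⟩ := hmcr1 w
  conv_lhs => rw [he]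
  exact mcr_coset cs hWJ hmcr1 hmcr2 hu w

theorem deodhar (hWJ : WJ = Subgroup.closure (cs.simple '' J))
    (hmcr1 : ∀ w : W, ∃ u ∈ WJ, mcr w = u * w)
    (hmcr2 : ∀ w y : W, (∃ u ∈ WJ, y = u * w) → cs.length (mcr w) ≤ cs.length y)
    {z : W} (hz : mcr z = z) {i : B}
    (hne : mcr (z * cs.simple i) ≠ z * cs.simple i) :
    ∃ j ∈ J, z * cs.simple i = cs.simple j * z
      ∧ cs.length (z * cs.simple i) = cs.length z + 1 := by
  have hminz : MinP cs WJ z := (mcr_eq_self_iff cs hWJ hmcr1 hmcr2 z).mp hz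
  have hlen1 : cs.length (z * cs.simple i) = cs.length z + 1 := by
    rcases cs.length_mul_simple z i with h1 | h1
    · exact h1
    · exfalso
      apply hne
      rw [mcr_eq_self_iff cs hWJ hmcr1 hmcr2]
      intro u hu
      have h2 := hminz u hu
      have h3 := cs.length_mul_simple (u * z) i
      rw [← mul_assoc] at *
      omega
  have hnotmin : ¬ MinP cs WJ (z * cs.simple i) := fun hm =>
    hne ((mcr_eq_self_iff cs hWJ hmcr1 hmcr2 _).mpr hm)
  obtain ⟨u, hu, hult⟩ : ∃ u ∈ WJ,
      cs.length (u * (z * cs.simple i)) < cs.length (z * cs.simple i) := by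
    by_contra hc
    push_neg at hc
    exact hnotmin fun u hu => hc u hu
  have hmu := length_mul_of_min cs hWJ hminz hu
  have h3 := cs.length_mul_simple (u * z) i
  rw [show u * (z * cs.simple i) = u * z * cs.simple i by rw [mul_assoc]] at hult
  have hune : u ≠ 1 := by
    intro h1
    rw [h1, one_mul] at hult
    omega
  have hu0 : cs.length u ≠ 0 := fun h0 => hune ((cs.length_eq_zero_iff).mp h0)
  have hu1 : cs.length u = 1 := by omega
  obtain ⟨ω, hred, hJ, hprod⟩ := exists_reduced_Jword cs hWJ hu
  have hω1 : ω.length = 1 := by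
    unfold CoxeterSystem.IsReduced at hred
    rw [hprod, hu1] at hred
    omega
  obtain ⟨j, rfl⟩ := List.length_eq_one_iff.mp hω1
  rw [wordProd_singleton] at hprod
  have hj : j ∈ J := hJ j (List.mem_singleton_self j)
  refine ⟨j, hj, ?_, hlen1⟩
  obtain ⟨ζ, hζlen, hζprod⟩ := cs.exists_reduced_word z
  have hζlen : ζ.length = cs.length z := by rw [hζprod]; exact hζlen.symm
  have hcatprod : cs.wordProd (ζ ++ [i]) = z * cs.simple i := by
    rw [wordProd_append, wordProd_singleton, ← hζprod]
  have hcatred : cs.IsReduced (ζ ++ [i]) := by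
    unfold CoxeterSystem.IsReduced
    rw [hcatprod, List.length_append, hζlen, hlen1]
    simp
  have hd : cs.length (cs.simple j * cs.wordProd (ζ ++ [i]))
      < cs.length (cs.wordProd (ζ ++ [i])) := by
    rw [hcatprod]
    rw [← hprod] at hult
    rw [show cs.simple j * (z * cs.simple i) = cs.simple j * z * cs.simple i by
      rw [mul_assoc]]
    exact hult
  obtain ⟨k, hk, hEq⟩ := exchange_left cs hcatred hd
  rw [hcatprod] at hEq
  by_cases hkζ : k < ζ.length
  · exfalso
    rw [List.eraseIdx_append_of_lt_length hkζ, wordProd_append, wordProd_singleton] at hEq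
    have hEq2 : cs.simple j * z = cs.wordProd (ζ.eraseIdx k) :=
      mul_right_cancel (by rw [← mul_assoc] at hEq; exact hEq)
    have hle := cs.length_wordProd_le (ζ.eraseIdx k)
    rw [← hEq2] at hle
    have hlen2 := List.length_eraseIdx_add_one hkζ
    have hjz : cs.length (cs.simple j * z) = 1 + cs.length z := by
      have := length_mul_of_min cs hWJ hminz (simple_mem_WJ cs hWJ hj)
      rwa [cs.length_simple] at this
    omega
  · push_neg at hkζ
    rw [List.length_append, List.length_singleton] at hk
    have hkeq : k = ζ.length := by omega
    rw [hkeq, List.eraseIdx_append_of_length_le (le_refl ζ.length), Nat.sub_self] at hEq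
    simp only [List.eraseIdx_cons_zero, List.append_nil] at hEq
    rw [← hζprod] at hEq
    calc z * cs.simple i = cs.simple j * (cs.simple j * (z * cs.simple i)) := by
          rw [cs.simple_mul_simple_cancel_left]
    _ = cs.simple j * z := by rw [hEq]
end Mcr


section ModulePart

theorem sdefAux_nil (mcr : W → W) (z : W) : sdefAux cs mcr z [] = 0 := rfl

theorem sdefAux_cons (mcr : W → W) (z : W) (p : B × Bool) (l : List (B × Bool)) :
    sdefAux cs mcr z (p :: l) =
      (if mcr (z * cs.simple p.1) ≠ z * cs.simple p.1 then (if p.2 then -1 else 1)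
       else if cs.length z < cs.length (z * cs.simple p.1) then (if p.2 then 0 else 1)
       else (if p.2 then 0 else -1))
      + sdefAux cs mcr (if p.2 then mcr (z * cs.simple p.1) else z) l := rfl

theorem subletters_nil : subletters ([] : List (B × Bool)) = [] := rfl

theorem subletters_cons_true (i : B) (l : List (B × Bool)) :
    subletters ((i, true) :: l) = i :: subletters l := rfl

theorem subletters_cons_false (i : B) (l : List (B × Bool)) :
    subletters ((i, false) :: l) = subletters l := rfl

variable {H : Type} [Ring H] [Algebra (LaurentPolynomial ℤ) H]
variable {MM : Type} [AddCommGroup MM] [Module (LaurentPolynomial ℤ) MM]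
  [Module Hᵐᵒᵖ MM] [IsScalarTower (LaurentPolynomial ℤ) Hᵐᵒᵖ MM]

theorem op_smul_smul' (c : LaurentPolynomial ℤ) (h : H) (m : MM) :
    op h • (c • m) = c • (op h • m) := by
  have h1 : c • m = (c • (1 : Hᵐᵒᵖ)) • m := by rw [smul_assoc, one_smul]
  rw [h1, ← mul_smul]
  have h2 : op h * (c • (1 : Hᵐᵒᵖ)) = c • op h := by
    rw [mul_smul_comm, mul_one]
  rw [h2, smul_assoc]

theorem op_mul_smul' (h h' : H) (m : MM) : op (h * h') • m = op h' • (op h • m) := by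
  rw [MulOpposite.op_mul, mul_smul]

theorem sum_fn_succ {n : ℕ} {A : Type} [AddCommMonoid A] (F : (Fin (n + 1) → Bool) → A) :
    (∑ e : Fin (n + 1) → Bool, F e) = ∑ b : Bool, ∑ e : Fin n → Bool, F (Fin.cons b e) := by
  rw [← Equiv.sum_comp (Fin.consEquiv (fun _ : Fin (n + 1) => Bool)) F, Fintype.sum_prod_type]
  rfl

theorem expand {mcr : W → W} {J : Set B} {WJ : Subgroup W}
    (hWJ : WJ = Subgroup.closure (cs.simple '' J))
    (hmcr1 : ∀ w : W, ∃ u ∈ WJ, mcr w = u * w)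
    (hmcr2 : ∀ w y : W, (∃ u ∈ WJ, y = u * w) → cs.length (mcr w) ≤ cs.length y)
    (δ : Module.Basis W (LaurentPolynomial ℤ) H)
    (hmul : ∀ u w : W, cs.length (u * w) = cs.length u + cs.length w →
        δ u * δ w = δ (u * w))
    (hquad : ∀ i : B, δ (cs.simple i) * δ (cs.simple i)
        = 1 + ((T (-1) - T 1 : LaurentPolynomial ℤ)) • δ (cs.simple i))
    (m1 : MM)
    (hsph : ∀ j ∈ J, op (δ (cs.simple j)) • m1 = (T (-1) : LaurentPolynomial ℤ) • m1) :
    ∀ (xs : List B) (z : W), mcr z = z →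
      op ((xs.map fun i => δ (cs.simple i) + (T 1 : LaurentPolynomial ℤ) • (1 : H)).prod)
          • (op (δ z) • m1)
      = ∑ e : Fin xs.length → Bool,
          (T (sdefAux cs mcr z (xs.zip (List.ofFn e))) : LaurentPolynomial ℤ) •
            (op (δ (mcr (z * cs.wordProd (subletters (xs.zip (List.ofFn e)))))) • m1) := by
  have step : ∀ (z : W), mcr z = z → ∀ (i : B),
      op (δ z * (δ (cs.simple i) + (T 1 : LaurentPolynomial ℤ) • (1 : H))) • m1
      = ∑ b : Bool,
         (T (if mcr (z * cs.simple i) ≠ z * cs.simple i then (if b then -1 else 1)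
             else if cs.length z < cs.length (z * cs.simple i) then (if b then (0 : ℤ) else 1)
             else (if b then 0 else -1)) : LaurentPolynomial ℤ) •
           (op (δ (if b then mcr (z * cs.simple i) else z)) • m1) := by
    intro z hz i
    have hdistrib : δ z * (δ (cs.simple i) + (T 1 : LaurentPolynomial ℤ) • (1 : H))
        = δ z * δ (cs.simple i) + (T 1 : LaurentPolynomial ℤ) • δ z := by
      rw [mul_add, mul_smul_comm, mul_one]
    have htt : ((true : Bool) = true) = True := by simp
    have hft : ((false : Bool) = true) = False := by simp
    rw [hdistrib, MulOpposite.op_add, add_smul, MulOpposite.op_smul, smul_assoc,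
      Fintype.sum_bool]
    simp only [htt, hft, if_true, if_false]
    by_cases hX : mcr (z * cs.simple i) ≠ z * cs.simple i
    · obtain ⟨j, hj, hzs, hlen⟩ := deodhar cs hWJ hmcr1 hmcr2 hz hX
      have hmcrzs : mcr (z * cs.simple i) = z := by
        rw [hzs, mcr_coset cs hWJ hmcr1 hmcr2 (simple_mem_WJ cs hWJ hj) z, hz]
      have hmm : δ z * δ (cs.simple i) = δ (cs.simple j) * δ z := by
        rw [hmul z (cs.simple i) (by rw [cs.length_simple]; exact hlen), hzs,
          ← hmul (cs.simple j) z (by rw [cs.length_simple, ← hzs, hlen, add_comm])]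
      have hact : op (δ z * δ (cs.simple i)) • m1
          = (T (-1) : LaurentPolynomial ℤ) • (op (δ z) • m1) := by
        rw [hmm, op_mul_smul', hsph j hj, op_smul_smul']
      rw [hact, if_pos hX, if_pos hX, hmcrzs]
    · push_neg at hX
      simp only [hX, ne_self_iff_false, if_false]
      by_cases hUp : cs.length z < cs.length (z * cs.simple i)
      · have hlen : cs.length (z * cs.simple i) = cs.length z + 1 := by
          have := cs.length_mul_simple z i
          omega
        have hmm : δ z * δ (cs.simple i) = δ (z * cs.simple i) :=
          hmul z (cs.simple i) (by rw [cs.length_simple]; exact hlen)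
        rw [hmm, if_pos hUp, if_pos hUp, T_zero, one_smul]
      · have hlen : cs.length (z * cs.simple i) + 1 = cs.length z := by
          have h1 := cs.length_mul_simple z i
          have h2 := cs.length_mul_simple_ne z i
          omega
        have hz'z : z * cs.simple i * cs.simple i = z := cs.simple_mul_simple_cancel_right i
        have hmulz' : δ (z * cs.simple i) * δ (cs.simple i) = δ z := by
          rw [hmul (z * cs.simple i) (cs.simple i)
            (by rw [cs.length_simple, hz'z]; omega), hz'z]
        have hq : δ z * δ (cs.simple i)
            = δ (z * cs.simple i) + (T (-1) - T 1 : LaurentPolynomial ℤ) • δ z := by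
          conv_lhs => rw [← hmulz']
          rw [mul_assoc, hquad i, mul_add, mul_one, mul_smul_comm, hmulz']
        rw [hq, MulOpposite.op_add, add_smul, MulOpposite.op_smul, smul_assoc,
          if_neg hUp, if_neg hUp, T_zero, one_smul, add_assoc, ← add_smul, sub_add_cancel]
  intro xs
  induction xs with
  | nil =>
    intro z hz
    simp only [List.map_nil, List.prod_nil, op_one, one_smul]
    haveI : Unique (Fin ([] : List B).length → Bool) :=
      ⟨⟨fun _ => false⟩, fun f => funext fun x => Fin.elim0 x⟩
    rw [Fintype.sum_unique]
    simp only [List.zip_nil_left, sdefAux_nil, subletters_nil, wordProd_nil, mul_one, hz,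
      T_zero, one_smul]
  | cons i xs ih =>
    intro z hz
    rw [List.map_cons, List.prod_cons, op_mul_smul']
    rw [show op (δ (cs.simple i) + (T 1 : LaurentPolynomial ℤ) • (1 : H)) • (op (δ z) • m1)
        = op (δ z * (δ (cs.simple i) + (T 1 : LaurentPolynomial ℤ) • (1 : H))) • m1 by
      rw [op_mul_smul']]
    rw [step z hz i, Finset.smul_sum]
    have hterm : ∀ b : Bool,
        op ((xs.map fun i => δ (cs.simple i) + (T 1 : LaurentPolynomial ℤ) • (1 : H)).prod) •
          ((T (if mcr (z * cs.simple i) ≠ z * cs.simple i then (if b then -1 else 1)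
             else if cs.length z < cs.length (z * cs.simple i) then (if b then (0 : ℤ) else 1)
             else (if b then 0 else -1)) : LaurentPolynomial ℤ) •
           (op (δ (if b then mcr (z * cs.simple i) else z)) • m1))
        = ∑ e : Fin xs.length → Bool,
            (T ((if mcr (z * cs.simple i) ≠ z * cs.simple i then (if b then -1 else 1)
             else if cs.length z < cs.length (z * cs.simple i) then (if b then (0 : ℤ) else 1)
             else (if b then 0 else -1))
              + sdefAux cs mcr (if b then mcr (z * cs.simple i) else z)
                  (xs.zip (List.ofFn e))) : LaurentPolynomial ℤ) •
              (op (δ (mcr ((if b then mcr (z * cs.simple i) else z)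
                * cs.wordProd (subletters (xs.zip (List.ofFn e)))))) • m1) := by
      intro b
      rw [op_smul_smul']
      have hfix : mcr (if b then mcr (z * cs.simple i) else z)
          = (if b then mcr (z * cs.simple i) else z) := by
        cases b
        · simpa using hz
        · simpa using mcr_idem cs hWJ hmcr1 hmcr2 (z * cs.simple i)
      rw [ih _ hfix, Finset.smul_sum]
      refine Finset.sum_congr rfl fun e _ => ?_
      rw [smul_smul, ← T_add]
    simp only [hterm]
    refine Eq.trans ?_ (sum_fn_succ _).symm
    refine Finset.sum_congr rfl fun b _ => ?_
    refine Finset.sum_congr rfl fun e _ => ?_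
    have hofn : List.ofFn (Fin.cons b e : Fin (xs.length + 1) → Bool) = b :: List.ofFn e := by
      rw [List.ofFn_succ]
      simp
    rw [hofn, List.zip_cons_cons, sdefAux_cons]
    have htt : ((true : Bool) = true) = True := by simp
    have hft : ((false : Bool) = true) = False := by simp
    cases b
    · simp only [subletters_cons_false, hft, if_false]
    · simp only [subletters_cons_true, htt, if_true]
      congr 2
      obtain ⟨u, hu, he⟩ := hmcr1 (z * cs.simple i)
      rw [wordProd_cons, he, mul_assoc, mcr_coset cs hWJ hmcr1 hmcr2 hu, ← mul_assoc]

end ModulePart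

end SphericalAux

/-- In the spherical module M(J) with the bilinear form ⟨·,·⟩_M making the
standard basis {m_z : z ∈ ᴶW} orthonormal, for any expressions x̲, y̲:
⟨1⊗b_{x̲}, 1⊗b_{y̲}⟩_M = Σ v^{sdef(e̲)+sdef(f̲)}, summed over pairs of subexpressions
e̲ ⊆ x̲, f̲ ⊆ y̲ with W_J·x̲^{e̲} = W_J·y̲^{f̲}. -/
theorem stmt_12 {B W : Type} [Group W] {M : CoxeterMatrix B} (cs : CoxeterSystem M W)
    (J : Set B) (WJ : Subgroup W) (hWJ : WJ = Subgroup.closure (cs.simple '' J))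
    (mcr : W → W)
    (hmcr1 : ∀ w : W, ∃ u ∈ WJ, mcr w = u * w)
    (hmcr2 : ∀ w y : W, (∃ u ∈ WJ, y = u * w) → cs.length (mcr w) ≤ cs.length y)
    (H : Type) [Ring H] [Algebra (LaurentPolynomial ℤ) H]
    (δ : Module.Basis W (LaurentPolynomial ℤ) H) (hδ1 : δ 1 = 1)
    (hmul : ∀ u w : W, cs.length (u * w) = cs.length u + cs.length w →
        δ u * δ w = δ (u * w))
    (hquad : ∀ i : B, δ (cs.simple i) * δ (cs.simple i)
        = 1 + ((T (-1) - T 1 : LaurentPolynomial ℤ)) • δ (cs.simple i))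
    (MM : Type) [AddCommGroup MM] [Module (LaurentPolynomial ℤ) MM]
    [Module Hᵐᵒᵖ MM] [IsScalarTower (LaurentPolynomial ℤ) Hᵐᵒᵖ MM]
    (m1 : MM)
    (hsph : ∀ j ∈ J, op (δ (cs.simple j)) • m1 = (T (-1) : LaurentPolynomial ℤ) • m1)
    (form : MM →ₗ[LaurentPolynomial ℤ] MM →ₗ[LaurentPolynomial ℤ] LaurentPolynomial ℤ)
    (horth : ∀ x y : W, mcr x = x → mcr y = y →
        form (op (δ x) • m1) (op (δ y) • m1) = if x = y then 1 else 0) :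
    ∀ xs ys : List B,
      form
        (op (xs.map fun i => δ (cs.simple i) + (T 1 : LaurentPolynomial ℤ) • (1 : H)).prod • m1)
        (op (ys.map fun i => δ (cs.simple i) + (T 1 : LaurentPolynomial ℤ) • (1 : H)).prod • m1)
      = ∑ e : Fin xs.length → Bool, ∑ f : Fin ys.length → Bool,
          if mcr (cs.wordProd (subletters (xs.zip (List.ofFn e))))
              = mcr (cs.wordProd (subletters (ys.zip (List.ofFn f)))) then
            (T (sdefAux cs mcr 1 (xs.zip (List.ofFn e))
                + sdefAux cs mcr 1 (ys.zip (List.ofFn f))) : LaurentPolynomial ℤ)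
          else 0 := by
  intro xs ys
  have hmcr_one : mcr 1 = 1 := by
    rw [SphericalAux.mcr_eq_self_iff cs hWJ hmcr1 hmcr2]
    intro u hu
    simp
  have hex := SphericalAux.expand cs hWJ hmcr1 hmcr2 δ hmul hquad m1 hsph
  have hx := hex xs 1 hmcr_one
  have hy := hex ys 1 hmcr_one
  simp only [one_mul, hδ1, MulOpposite.op_one, one_smul] at hx hy
  rw [hx, hy]
  simp only [map_sum, LinearMap.sum_apply, map_smul, LinearMap.smul_apply, Finset.smul_sum]
  rw [Finset.sum_comm]
  refine Finset.sum_congr rfl fun e _ => ?_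
  refine Finset.sum_congr rfl fun f _ => ?_
  rw [horth _ _
    (SphericalAux.mcr_idem cs hWJ hmcr1 hmcr2 _)
    (SphericalAux.mcr_idem cs hWJ hmcr1 hmcr2 _)]
  by_cases hEq : mcr (cs.wordProd (subletters (xs.zip (List.ofFn e))))
      = mcr (cs.wordProd (subletters (ys.zip (List.ofFn f))))
  · rw [if_pos hEq, if_pos hEq, smul_eq_mul, smul_eq_mul, mul_one, ← T_add,
      add_comm (sdefAux cs mcr 1 (ys.zip (List.ofFn f)))
        (sdefAux cs mcr 1 (xs.zip (List.ofFn e)))]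
  · rw [if_neg hEq, if_neg hEq, smul_zero, smul_zero]
end
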